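/- arXiv:1308.5399 — 4 statements merged into one kernel-verified Lean document; each statement's English description precedes it below -/
import Mathlib

section
/- s_odd(n, k) equals the number of pairs (ℓ, σ) where σ is a permutation of {1,...,n} with exactly k cycles σ^(1),...,σ^(k) ordered so that min(σ^(1)) < ... < min(σ^(k)), and ℓ ∈ {1,...,n} satisfies min(σ^(ℓ)) = ℓ. -/
/-- Stirling numbers of odd type of the second kind:
S_odd(n,k) = S_odd(n-1,k-1) + k·S_odd(n-1,k) + δ_{n,k}, S_odd(0,0) = 0,
S_odd(n,k) = 0 for n < k. -/
def Sodd : ℕ → ℕ → ℕ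
  | 0, _ => 0
  | _ + 1, 0 => 0
  | n + 1, k + 1 => Sodd n k + (k + 1) * Sodd n (k + 1) + if n = k then 1 else 0

/-- Stirling numbers of odd type of the first kind:
s_odd(n,k) = s_odd(n-1,k-1) + (n-1)·s_odd(n-1,k) + δ_{n,k}, s_odd(0,0) = 0,
s_odd(n,k) = 0 for n < k. -/
def sodd : ℕ → ℕ → ℕ
  | 0, _ => 0
  | n + 1, 0 => n * sodd n 0
  | n + 1, k + 1 => sodd n k + n * sodd n (k + 1) + if n = k then 1 else 0

open scoped Classical

/-- The set of cycle minima of a permutation of Fin n. -/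
noncomputable def cycleMins (n : ℕ) (σ : Equiv.Perm (Fin n)) : Finset (Fin n) :=
  Finset.univ.filter fun x => ∀ y, σ.SameCycle x y → x ≤ y

open Equiv Equiv.Perm Finset

set_option linter.unusedSectionVars false




/-- Removing the last element from a permutation of `Fin (n+1)`. -/
noncomputable def decompLast (n : ℕ) :
    Equiv.Perm (Fin (n + 1)) ≃ Fin (n + 1) × Equiv.Perm (Fin n) :=
  ((Equiv.permCongr finSuccEquivLast).trans Equiv.Perm.decomposeOption).trans
    (Equiv.prodCongr finSuccEquivLast.symm (Equiv.refl _))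

lemma decompLast_fst {n : ℕ} (σ : Equiv.Perm (Fin (n + 1))) :
    ((decompLast n) σ).1 = σ (Fin.last n) := by
  simp [decompLast, Equiv.permCongr_apply]

lemma decompLast_symm_apply_last {n : ℕ} (p : Fin (n + 1)) (e : Equiv.Perm (Fin n)) :
    (decompLast n).symm (p, e) (Fin.last n) = p := by
  simp [decompLast, Equiv.permCongr_apply]

lemma decompLast_symm_apply_castSucc {n : ℕ} (p : Fin (n + 1)) (e : Equiv.Perm (Fin n))
    (y : Fin n) :
    (decompLast n).symm (p, e) (Fin.castSucc y) =
      if Fin.castSucc (e y) = p then Fin.last n else Fin.castSucc (e y) := by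
  simp only [decompLast, Equiv.symm_trans_apply, Equiv.prodCongr_symm, Equiv.refl_symm,
    Equiv.prodCongr_apply, Prod.map, Equiv.symm_symm, Equiv.refl_apply,
    Equiv.permCongr_symm, Equiv.permCongr_apply, Equiv.symm_symm,
    Perm.decomposeOption_symm_apply, Equiv.Perm.coe_mul, Function.comp_apply,
    finSuccEquivLast_castSucc, Equiv.optionCongr_apply, Option.map_some]
  by_cases h : Fin.castSucc (e y) = p
  · have : (some (e y)) = finSuccEquivLast p := by
      rw [← h]; simp [finSuccEquivLast_castSucc]
    rw [if_pos h, ← this, Equiv.swap_apply_right]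
    simp
  · have hne : (some (e y)) ≠ finSuccEquivLast p := by
      intro hc
      apply h
      have := congrArg finSuccEquivLast.symm hc
      simpa using this
    rw [if_neg h, Equiv.swap_apply_of_ne_of_ne (by simp) hne]
    simp

lemma mem_cycleMins {n : ℕ} {σ : Equiv.Perm (Fin n)} {x : Fin n} :
    x ∈ cycleMins n σ ↔ ∀ i : ℕ, x ≤ (σ ^ i) x := by
  simp only [cycleMins, Finset.mem_filter, Finset.mem_univ, true_and]
  constructor
  · intro h i
    exact h _ ⟨(i : ℤ), by simp [zpow_natCast]⟩
  · intro h y hxy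
    obtain ⟨i, -, rfl⟩ := hxy.exists_pow_eq'
    exact h i

section Decomp

variable {n : ℕ} {p : Fin (n + 1)} {e : Equiv.Perm (Fin n)} {σ : Equiv.Perm (Fin (n + 1))}
variable (hlast : σ (Fin.last n) = p)
variable (hcs : ∀ y : Fin n, σ (Fin.castSucc y) =
    if Fin.castSucc (e y) = p then Fin.last n else Fin.castSucc (e y))

include hlast hcs

lemma orbit_up (x : Fin n) : ∀ i : ℕ, ∃ j : ℕ, (σ ^ j) x.castSucc = ((e ^ i) x).castSucc := by
  intro i
  induction i with
  | zero => exact ⟨0, by simp⟩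
  | succ i ih =>
    obtain ⟨j, hj⟩ := ih
    have hstep : (e ^ (i + 1)) x = e ((e ^ i) x) := by
      rw [pow_succ', Equiv.Perm.mul_apply]
    by_cases h : Fin.castSucc (e ((e ^ i) x)) = p
    · refine ⟨j + 2, ?_⟩
      have h1 : (σ ^ (j + 1)) x.castSucc = Fin.last n := by
        rw [pow_succ', Equiv.Perm.mul_apply, hj, hcs, if_pos h]
      have h2 : (σ ^ (j + 2)) x.castSucc = p := by
        rw [show j + 2 = (j + 1) + 1 by ring, pow_succ', Equiv.Perm.mul_apply, h1, hlast]
      rw [h2, hstep, h]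
    · refine ⟨j + 1, ?_⟩
      rw [pow_succ', Equiv.Perm.mul_apply, hj, hcs, if_neg h, hstep]

lemma orbit_down (x : Fin n) : ∀ j : ℕ,
    ((σ ^ j) x.castSucc = Fin.last n ∧ ∃ i, ((e ^ i) x).castSucc = p) ∨
      ∃ i, (σ ^ j) x.castSucc = ((e ^ i) x).castSucc := by
  intro j
  induction j with
  | zero => exact Or.inr ⟨0, by simp⟩
  | succ j ih =>
    rcases ih with ⟨hl, i, hi⟩ | ⟨i, hi⟩
    · exact Or.inr ⟨i, by rw [pow_succ', Equiv.Perm.mul_apply, hl, hlast, hi]⟩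
    · have hstep : (e ^ (i + 1)) x = e ((e ^ i) x) := by
        rw [pow_succ', Equiv.Perm.mul_apply]
      by_cases h : Fin.castSucc (e ((e ^ i) x)) = p
      · refine Or.inl ⟨?_, i + 1, ?_⟩
        · rw [pow_succ', Equiv.Perm.mul_apply, hi, hcs, if_pos h]
        · rw [hstep]; exact h
      · refine Or.inr ⟨i + 1, ?_⟩
        rw [pow_succ', Equiv.Perm.mul_apply, hi, hcs, if_neg h, hstep]

lemma castSucc_mem_cycleMins_iff (x : Fin n) :
    x.castSucc ∈ cycleMins (n + 1) σ ↔ x ∈ cycleMins n e := by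
  rw [mem_cycleMins, mem_cycleMins]
  constructor
  · intro h i
    obtain ⟨j, hj⟩ := orbit_up hlast hcs x i
    have := h j
    rw [hj] at this
    exact Fin.castSucc_le_castSucc_iff.mp this
  · intro h j
    rcases orbit_down hlast hcs x j with ⟨hl, -⟩ | ⟨i, hi⟩
    · rw [hl]; exact Fin.le_last _
    · rw [hi]; exact Fin.castSucc_le_castSucc_iff.mpr (h i)

lemma last_mem_cycleMins_iff :
    Fin.last n ∈ cycleMins (n + 1) σ ↔ p = Fin.last n := by
  rw [mem_cycleMins]
  constructor
  · intro h
    have h1 := h 1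
    rw [pow_one, hlast] at h1
    exact (Fin.last_le_iff.mp h1)
  · intro h i
    have hfix : ∀ m : ℕ, (σ ^ m) (Fin.last n) = Fin.last n := by
      intro m
      induction m with
      | zero => simp
      | succ m ih => rw [pow_succ', Equiv.Perm.mul_apply, ih, hlast, h]
    rw [hfix]

lemma cycleMins_decomp :
    cycleMins (n + 1) σ =
      if p = Fin.last n then
        insert (Fin.last n) ((cycleMins n e).map ⟨Fin.castSucc, Fin.castSucc_injective n⟩)
      else (cycleMins n e).map ⟨Fin.castSucc, Fin.castSucc_injective n⟩ := by
  ext z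
  induction z using Fin.lastCases with
  | last =>
    rw [last_mem_cycleMins_iff hlast hcs]
    by_cases h : p = Fin.last n
    · simp [h]
    · simp only [if_neg h, Finset.mem_map, Function.Embedding.coeFn_mk]
      constructor
      · intro hc; exact absurd hc h
      · rintro ⟨x, -, hx⟩
        exact absurd hx (Fin.castSucc_lt_last x).ne
  | cast x =>
    rw [castSucc_mem_cycleMins_iff hlast hcs]
    have hne : Fin.castSucc x ≠ Fin.last n := (Fin.castSucc_lt_last x).ne
    by_cases h : p = Fin.last n <;>
      simp [h, hne, Fin.castSucc_injective n |>.eq_iff]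

lemma cycleMins_decomp_card :
    (cycleMins (n + 1) σ).card =
      (cycleMins n e).card + if p = Fin.last n then 1 else 0 := by
  rw [cycleMins_decomp hlast hcs]
  have hnm : Fin.last n ∉ (cycleMins n e).map ⟨Fin.castSucc, Fin.castSucc_injective n⟩ := by
    simp only [Finset.mem_map, Function.Embedding.coeFn_mk, not_exists, not_and]
    intro x _
    exact (Fin.castSucc_lt_last x).ne
  by_cases h : p = Fin.last n
  · rw [if_pos h, if_pos h, Finset.card_insert_of_notMem hnm, Finset.card_map]
  · rw [if_neg h, if_neg h, Finset.card_map, Nat.add_zero]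

lemma cycleMins_decomp_initial {ℓ : ℕ} (hℓ : ℓ ≤ n) :
    (∀ z : Fin (n + 1), (z : ℕ) < ℓ → z ∈ cycleMins (n + 1) σ) ↔
      (∀ x : Fin n, (x : ℕ) < ℓ → x ∈ cycleMins n e) := by
  constructor
  · intro h x hx
    have := h x.castSucc (by simpa using hx)
    rwa [castSucc_mem_cycleMins_iff hlast hcs] at this
  · intro h z hz
    have hzn : (z : ℕ) < n := lt_of_lt_of_le hz hℓ
    have hz' : z = Fin.castSucc ⟨(z : ℕ), hzn⟩ := by
      apply Fin.ext; simp
    rw [hz', castSucc_mem_cycleMins_iff hlast hcs]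
    exact h _ hz

end Decomp

lemma cycleMins_one (n : ℕ) : cycleMins n (1 : Equiv.Perm (Fin n)) = Finset.univ := by
  ext x
  simp only [cycleMins, Finset.mem_filter, Finset.mem_univ, true_and, iff_true]
  intro y hy
  rw [Equiv.Perm.sameCycle_one] at hy
  exact le_of_eq hy

lemma eq_one_of_cycleMins_card {n : ℕ} {σ : Equiv.Perm (Fin n)}
    (h : (cycleMins n σ).card = n) : σ = 1 := by
  have huniv : cycleMins n σ = Finset.univ :=
    Finset.eq_univ_of_card _ (h.trans (Fintype.card_fin n).symm)
  have hP : ∀ z : Fin n, ∀ y, σ.SameCycle z y → z ≤ y := by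
    intro z
    have : z ∈ cycleMins n σ := huniv ▸ Finset.mem_univ z
    simpa [cycleMins] using this
  ext x
  have h1 : x ≤ σ x := hP x (σ x) ⟨1, by simp⟩
  have h2 : σ x ≤ x := hP (σ x) x (Equiv.Perm.SameCycle.symm ⟨1, by simp⟩)
  have h3 : σ x = x := le_antisymm h2 h1
  simp [h3]

lemma strictMono_val_le {k n : ℕ} {g : Fin k → Fin n} (hg : StrictMono g) :
    ∀ m (hm : m < k), m ≤ (g ⟨m, hm⟩ : ℕ) := by
  intro m
  induction m with
  | zero => intro hm; exact Nat.zero_le _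
  | succ m ih =>
    intro hm
    have hm' : m < k := Nat.lt_of_succ_lt hm
    have hlt : g ⟨m, hm'⟩ < g ⟨m + 1, hm⟩ := hg (by simp [Fin.mk_lt_mk])
    have := ih hm'
    have hv : (g ⟨m, hm'⟩ : ℕ) < (g ⟨m + 1, hm⟩ : ℕ) := hlt
    omega

lemma strictMono_val_add {k n : ℕ} {g : Fin k → Fin n} (hg : StrictMono g) :
    ∀ d m (h : m + d < k), (g ⟨m, by omega⟩ : ℕ) + d ≤ (g ⟨m + d, h⟩ : ℕ) := by
  intro d
  induction d with
  | zero => intro m h; simp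
  | succ d ih =>
    intro m h
    have h' : m + d < k := by omega
    have hlt : g ⟨m + d, h'⟩ < g ⟨m + d + 1, by omega⟩ := hg (by simp [Fin.mk_lt_mk])
    have h1 := ih m h'
    have hv : (g ⟨m + d, h'⟩ : ℕ) < (g ⟨m + d + 1, by omega⟩ : ℕ) := hlt
    have : (⟨m + (d+1), h⟩ : Fin k) = ⟨m + d + 1, by omega⟩ := by simp [Fin.mk.injEq]; omega
    rw [this]
    omega

lemma initseg_iff {n k : ℕ} (M : Finset (Fin n)) (h : M.card = k) (j : ℕ) (hjk : j < k)
    (hjn : j < n) :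
    M.orderEmbOfFin h ⟨j, hjk⟩ = ⟨j, hjn⟩ ↔ ∀ x : Fin n, (x : ℕ) ≤ j → x ∈ M := by
  have hg : StrictMono (M.orderEmbOfFin h) := (M.orderEmbOfFin h).strictMono
  constructor
  · intro hj x hx
    have hxk : (x : ℕ) < k := lt_of_le_of_lt hx hjk
    have hadd := strictMono_val_add hg (j - (x : ℕ)) (x : ℕ) (by omega)
    have hfin : ∀ (hh : (x : ℕ) + (j - (x : ℕ)) < k),
        (⟨(x : ℕ) + (j - (x : ℕ)), hh⟩ : Fin k) = ⟨j, hjk⟩ := fun hh => Fin.ext (by simp; omega)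
    rw [hfin _] at hadd
    have hjval : ((M.orderEmbOfFin h ⟨j, hjk⟩ : Fin n) : ℕ) = j := by rw [hj]
    have hle := strictMono_val_le hg (x : ℕ) hxk
    have hxval : ((M.orderEmbOfFin h ⟨(x : ℕ), hxk⟩ : Fin n) : ℕ) = (x : ℕ) := by omega
    have : M.orderEmbOfFin h ⟨(x : ℕ), hxk⟩ = x := Fin.ext hxval
    rw [← this]
    exact Finset.orderEmbOfFin_mem M h _
  · intro hM
    have claim : ∀ m, m ≤ j → ∀ (hmk : m < k) (hmn : m < n),
        M.orderEmbOfFin h ⟨m, hmk⟩ = ⟨m, hmn⟩ := by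
      intro m
      induction m using Nat.strong_induction_on with
      | _ m IH =>
        intro hmj hmk hmn
        have hmem : (⟨m, hmn⟩ : Fin n) ∈ M := hM _ (by simpa using hmj)
        have : (⟨m, hmn⟩ : Fin n) ∈ Set.range (M.orderEmbOfFin h) := by
          rw [Finset.range_orderEmbOfFin]
          exact_mod_cast hmem
        obtain ⟨t, ht⟩ := this
        rcases lt_trichotomy (t : ℕ) m with hlt | heq | hgt
        · exfalso
          have h1 := IH (t : ℕ) hlt (by omega) t.2 (by omega)
          have : (⟨(t : ℕ), t.2⟩ : Fin k) = t := by simp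
          rw [this, ht] at h1
          have := congrArg Fin.val h1
          simp at this
          omega
        · have : t = ⟨m, hmk⟩ := Fin.ext heq
          rw [← this, ht]
        · exfalso
          have := strictMono_val_le hg (t : ℕ) t.2
          have h2 : (⟨(t : ℕ), t.2⟩ : Fin k) = t := by simp
          rw [h2, ht] at this
          simp at this
          omega
    exact claim j le_rfl hjk hjn

noncomputable def Sset (n k : ℕ) : Finset (ℕ × Equiv.Perm (Fin n)) :=
  (Finset.Icc 1 n ×ˢ Finset.univ).filter fun q =>
    q.1 ≤ k ∧ (cycleMins n q.2).card = k ∧ ∀ x : Fin n, (x : ℕ) < q.1 → x ∈ cycleMins n q.2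

lemma mem_Sset {n k ℓ : ℕ} {σ : Equiv.Perm (Fin n)} :
    (ℓ, σ) ∈ Sset n k ↔ 1 ≤ ℓ ∧ ℓ ≤ n ∧ ℓ ≤ k ∧ (cycleMins n σ).card = k ∧
      ∀ x : Fin n, (x : ℕ) < ℓ → x ∈ cycleMins n σ := by
  simp [Sset, Finset.mem_filter, Finset.mem_product, Finset.mem_Icc, and_assoc]

lemma hcs_self {n : ℕ} (σ : Equiv.Perm (Fin (n + 1))) :
    ∀ y : Fin n, σ (Fin.castSucc y) =
      if Fin.castSucc (((decompLast n) σ).2 y) = σ (Fin.last n) then Fin.last n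
      else Fin.castSucc (((decompLast n) σ).2 y) := by
  intro y
  conv_lhs => rw [← Equiv.symm_apply_apply (decompLast n) σ]
  rw [show (decompLast n) σ = (((decompLast n) σ).1, ((decompLast n) σ).2) from rfl,
    decompLast_symm_apply_castSucc, decompLast_fst]

lemma sodd_zero (n : ℕ) : sodd n 0 = 0 := by
  induction n with
  | zero => simp [sodd]
  | succ n ih => simp [sodd, ih]

lemma sort_getD_eq {n k : ℕ} (M : Finset (Fin n)) (h : M.card = k) (m : ℕ) (hm : m < k)
    (d : ℕ) :
    ((M.sort (· ≤ ·)).map Fin.val).getD m d = (M.orderEmbOfFin h ⟨m, hm⟩ : ℕ) := by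
  have hlen : m < ((M.sort (· ≤ ·)).map Fin.val).length := by
    rw [List.length_map, Finset.length_sort, h]; exact hm
  rw [List.getD_eq_getElem _ _ hlen, List.getElem_map, Finset.orderEmbOfFin_apply]
  rfl

lemma cond_iff (n k ℓ : ℕ) (σ : Equiv.Perm (Fin n)) :
    (1 ≤ ℓ ∧ ℓ ≤ n ∧ (cycleMins n σ).card = k ∧
      (((cycleMins n σ).sort (· ≤ ·)).map Fin.val).getD (ℓ - 1) n + 1 = ℓ) ↔
      (ℓ, σ) ∈ Sset n k := by
  rw [mem_Sset]
  constructor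
  · rintro ⟨h1, hn, hk, hgetD⟩
    have hlt : ℓ - 1 < k := by
      by_contra hcon
      rw [List.getD_eq_default _ _ (by rw [List.length_map, Finset.length_sort, hk]; omega)]
        at hgetD
      omega
    rw [sort_getD_eq _ hk _ hlt] at hgetD
    have hn1 : ℓ - 1 < n := by omega
    have hemb : (cycleMins n σ).orderEmbOfFin hk ⟨ℓ - 1, hlt⟩ = ⟨ℓ - 1, hn1⟩ :=
      Fin.ext (by show _ = ℓ - 1; omega)
    have hinit := (initseg_iff _ hk _ hlt hn1).mp hemb
    exact ⟨h1, hn, by omega, hk, fun x hx => hinit x (by omega)⟩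
  · rintro ⟨h1, hn, hkℓ, hk, hinit⟩
    have hlt : ℓ - 1 < k := by omega
    have hn1 : ℓ - 1 < n := by omega
    have hemb : (cycleMins n σ).orderEmbOfFin hk ⟨ℓ - 1, hlt⟩ = ⟨ℓ - 1, hn1⟩ :=
      (initseg_iff _ hk _ hlt hn1).mpr (fun x hx => hinit x (by omega))
    refine ⟨h1, hn, hk, ?_⟩
    rw [sort_getD_eq _ hk _ hlt, hemb]
    show ℓ - 1 + 1 = ℓ
    omega

lemma Sset_empty_left (k : ℕ) : Sset 0 k = ∅ := by
  rw [Finset.eq_empty_iff_forall_notMem]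
  rintro ⟨ℓ, σ⟩ hq
  rw [mem_Sset] at hq
  omega

lemma Sset_empty_right (n : ℕ) : Sset n 0 = ∅ := by
  rw [Finset.eq_empty_iff_forall_notMem]
  rintro ⟨ℓ, σ⟩ hq
  rw [mem_Sset] at hq
  omega

lemma card_cycleMins_le {n : ℕ} (σ : Equiv.Perm (Fin n)) : (cycleMins n σ).card ≤ n := by
  have := Finset.card_le_univ (cycleMins n σ)
  simpa using this

theorem Sset_card (n : ℕ) : ∀ k, (Sset n k).card = sodd n k := by
  induction n with
  | zero =>
    intro k
    rw [Sset_empty_left]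
    simp [sodd]
  | succ n IH =>
    intro k
    match k with
    | 0 =>
      rw [Sset_empty_right]
      simp [sodd_zero]
    | k + 1 =>
      set s := Sset (n + 1) (k + 1) with hs
      set A := s.filter (fun q => q.2 (Fin.last n) = Fin.last n) with hA
      set B := s.filter (fun q => ¬ q.2 (Fin.last n) = Fin.last n) with hB
      have hsplit : A.card + B.card = s.card :=
        Finset.card_filter_add_card_filter_not _
      set A1 := A.filter (fun q => q.1 ≤ k) with hA1
      set A2 := A.filter (fun q => ¬ q.1 ≤ k) with hA2
      have hsplitA : A1.card + A2.card = A.card :=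
        Finset.card_filter_add_card_filter_not _
      -- Claim 1 : A1.card = sodd n k
      have hclaim1 : A1.card = (Sset n k).card := by
        apply Finset.card_bij' (i := fun q _ => (q.1, ((decompLast n) q.2).2))
          (j := fun q _ => (q.1, (decompLast n).symm (Fin.last n, q.2)))
        case hi =>
          rintro ⟨ℓ, σ⟩ hq
          dsimp only
          rw [hA1, Finset.mem_filter] at hq
          obtain ⟨hqA, hℓk⟩ := hq
          rw [hA, Finset.mem_filter] at hqA
          obtain ⟨hqs, hfix⟩ := hqA
          rw [hs, mem_Sset] at hqs
          obtain ⟨h1, hn, hk1, hcard, hinit⟩ := hqs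
          have hcs := hcs_self σ
          have hcard' : (cycleMins (n + 1) σ).card = (cycleMins n ((decompLast n) σ).2).card + 1 := by
            rw [cycleMins_decomp_card rfl hcs, hfix, if_pos rfl]
          have hce : (cycleMins n ((decompLast n) σ).2).card = k := by omega
          have hkn : k ≤ n := hce ▸ card_cycleMins_le _
          rw [mem_Sset]
          exact ⟨h1, le_trans hℓk hkn, hℓk, hce,
            (cycleMins_decomp_initial rfl hcs (le_trans hℓk hkn)).mp hinit⟩
        case hj =>
          rintro ⟨ℓ, e⟩ hb
          dsimp only
          rw [mem_Sset] at hb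
          obtain ⟨h1, hn, hk, hcard, hinit⟩ := hb
          have hlast : (decompLast n).symm (Fin.last n, e) (Fin.last n) = Fin.last n :=
            decompLast_symm_apply_last _ _
          have hcs := decompLast_symm_apply_castSucc (Fin.last n) e
          rw [hA1, Finset.mem_filter, hA, Finset.mem_filter, hs, mem_Sset]
          refine ⟨⟨⟨h1, by omega, by omega, ?_, ?_⟩, hlast⟩, hk⟩
          · rw [cycleMins_decomp_card hlast hcs, if_pos rfl, hcard]
          · exact (cycleMins_decomp_initial hlast hcs hn).mpr hinit
        case left_inv =>
          rintro ⟨ℓ, σ⟩ hq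
          rw [hA1, Finset.mem_filter, hA, Finset.mem_filter] at hq
          have hfix := hq.1.2
          have h1 : ((decompLast n) σ).1 = Fin.last n := (decompLast_fst σ).trans hfix
          show (ℓ, (decompLast n).symm (Fin.last n, ((decompLast n) σ).2)) = (ℓ, σ)
          rw [← h1, Prod.mk.eta, Equiv.symm_apply_apply]
        case right_inv =>
          rintro ⟨ℓ, e⟩ hb
          show (ℓ, ((decompLast n) ((decompLast n).symm (Fin.last n, e))).2) = (ℓ, e)
          rw [Equiv.apply_symm_apply]
      -- Claim 2 : A2.card = if n = k then 1 else 0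
      have hclaim2 : A2.card = if n = k then 1 else 0 := by
        have hsub : ∀ q ∈ A2, n = k ∧ q = (n + 2 - 1, (1 : Equiv.Perm (Fin (n + 1)))) := by
          rintro ⟨ℓ, σ⟩ hq
          rw [hA2, Finset.mem_filter] at hq
          obtain ⟨hqA, hℓk⟩ := hq
          rw [hA, Finset.mem_filter] at hqA
          obtain ⟨hqs, hfix⟩ := hqA
          rw [hs, mem_Sset] at hqs
          obtain ⟨h1, hn, hk1, hcard, hinit⟩ := hqs
          have hℓ : ℓ = k + 1 := by omega
          have hkn : k + 1 ≤ n + 1 := hcard ▸ card_cycleMins_le _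
          have hlastmem : Fin.last n ∈ cycleMins (n + 1) σ :=
            (last_mem_cycleMins_iff rfl (hcs_self σ)).mpr hfix
          have hnk : n = k := by
            by_contra hne
            have hkn' : k + 1 < n + 1 := by omega
            set T := (Finset.range (k + 1)).attachFin
              (fun m hm => lt_trans (Finset.mem_range.mp hm) hkn') with hT
            have hTsub : T ⊆ cycleMins (n + 1) σ := by
              intro z hz
              rw [hT, Finset.mem_attachFin, Finset.mem_range] at hz
              exact hinit z (by omega)
            have hTlast : Fin.last n ∉ T := by
              rw [hT, Finset.mem_attachFin, Finset.mem_range]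
              simp only [Fin.val_last]
              omega
            have hins : insert (Fin.last n) T ⊆ cycleMins (n + 1) σ := by
              rw [Finset.insert_subset_iff]
              exact ⟨hlastmem, hTsub⟩
            have hcardins := Finset.card_le_card hins
            rw [Finset.card_insert_of_notMem hTlast, Finset.card_attachFin,
              Finset.card_range, hcard] at hcardins
            omega
          have hσ : σ = 1 := by
            apply eq_one_of_cycleMins_card
            rw [hcard]
            omega
          exact ⟨hnk, by rw [hσ, hℓ]; congr 2; omega⟩
        by_cases hnk : n = k
        · have hmem : ((n + 2 - 1 : ℕ), (1 : Equiv.Perm (Fin (n + 1)))) ∈ A2 := by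
            rw [hA2, Finset.mem_filter, hA, Finset.mem_filter, hs, mem_Sset]
            refine ⟨⟨⟨by omega, by omega, by omega, ?_, ?_⟩, ?_⟩, by omega⟩
            · rw [cycleMins_one, Finset.card_univ, Fintype.card_fin]
              omega
            · intro x _
              rw [cycleMins_one]
              exact Finset.mem_univ x
            · simp
          rw [if_pos hnk]
          have : A2 = {((n + 2 - 1 : ℕ), (1 : Equiv.Perm (Fin (n + 1))))} := by
            apply Finset.Subset.antisymm
            · intro q hq
              rw [Finset.mem_singleton]
              exact (hsub q hq).2
            · intro q hq
              rw [Finset.mem_singleton] at hq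
              rwa [hq]
          rw [this, Finset.card_singleton]
        · rw [if_neg hnk]
          rw [Finset.card_eq_zero, Finset.eq_empty_iff_forall_notMem]
          intro q hq
          exact hnk (hsub q hq).1
      -- Claim 3 : B.card = n * sodd n (k+1)
      have hclaim3 : B.card = ((Finset.univ : Finset (Fin n)) ×ˢ Sset n (k + 1)).card := by
        apply Finset.card_bij'
          (i := fun q hq => ((q.2 (Fin.last n)).castPred (by
            rw [hB, Finset.mem_filter] at hq; exact hq.2), (q.1, ((decompLast n) q.2).2)))
          (j := fun b _ => (b.2.1, (decompLast n).symm (Fin.castSucc b.1, b.2.2)))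
        case hi =>
          rintro ⟨ℓ, σ⟩ hq
          dsimp only
          have hq' := hq
          rw [hB, Finset.mem_filter] at hq'
          obtain ⟨hqs, hne⟩ := hq'
          rw [hs, mem_Sset] at hqs
          obtain ⟨h1, hn, hk1, hcard, hinit⟩ := hqs
          have hcs := hcs_self σ
          have hcard' : (cycleMins (n + 1) σ).card = (cycleMins n ((decompLast n) σ).2).card := by
            rw [cycleMins_decomp_card rfl hcs, if_neg hne]
            omega
          have hce : (cycleMins n ((decompLast n) σ).2).card = k + 1 := by omega
          have hkn : k + 1 ≤ n := hce ▸ card_cycleMins_le _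
          rw [Finset.mem_product]
          refine ⟨Finset.mem_univ _, ?_⟩
          rw [mem_Sset]
          exact ⟨h1, by omega, hk1, hce,
            (cycleMins_decomp_initial rfl hcs (by omega)).mp hinit⟩
        case hj =>
          rintro ⟨x, ℓ, e⟩ hb
          dsimp only
          rw [Finset.mem_product, mem_Sset] at hb
          obtain ⟨-, h1, hn, hk, hcard, hinit⟩ := hb
          have hlast : (decompLast n).symm (Fin.castSucc x, e) (Fin.last n) = Fin.castSucc x :=
            decompLast_symm_apply_last _ _
          have hcs := decompLast_symm_apply_castSucc (Fin.castSucc x) e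
          have hne : (decompLast n).symm (Fin.castSucc x, e) (Fin.last n) ≠ Fin.last n := by
            rw [hlast]
            exact (Fin.castSucc_lt_last x).ne
          rw [hB, Finset.mem_filter, hs, mem_Sset]
          refine ⟨⟨h1, by omega, by omega, ?_, ?_⟩, hne⟩
          · rw [cycleMins_decomp_card hlast hcs, if_neg (Fin.castSucc_lt_last x).ne, hcard]
          · exact (cycleMins_decomp_initial hlast hcs hn).mpr hinit
        case left_inv =>
          rintro ⟨ℓ, σ⟩ hq
          rw [hB, Finset.mem_filter] at hq
          have hne : σ (Fin.last n) ≠ Fin.last n := hq.2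
          show (ℓ, (decompLast n).symm
            (Fin.castSucc ((σ (Fin.last n)).castPred hne), ((decompLast n) σ).2)) = (ℓ, σ)
          rw [Fin.castSucc_castPred, ← decompLast_fst, Prod.mk.eta, Equiv.symm_apply_apply]
        case right_inv =>
          rintro ⟨x, ℓ, e⟩ hb
          simp only [Equiv.apply_symm_apply, decompLast_symm_apply_last, Fin.castPred_castSucc]
      -- assemble
      have hprod : ((Finset.univ : Finset (Fin n)) ×ˢ Sset n (k + 1)).card
          = n * (Sset n (k + 1)).card := by
        rw [Finset.card_product, Finset.card_univ, Fintype.card_fin]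
      have hfinal : s.card = sodd n k + n * sodd n (k + 1) + if n = k then 1 else 0 := by
        rw [← hsplit, ← hsplitA, hclaim1, hclaim2, hclaim3, hprod, IH, IH]
        ring
      rw [hfinal]
      simp [sodd]

/-- s_odd(n,k) counts permutations with leader: pairs (ℓ, σ) where σ is a permutation of
{1,...,n} with exactly k cycles ordered by their minima, and ℓ ∈ {1,...,n} such that the
ℓ-th smallest cycle minimum equals ℓ.  (Fin n represents {1,...,n} via x ↦ x + 1.) -/
theorem sodd_eq_permutations_with_leader (n k : ℕ) :
    Nat.card {p : ℕ × Equiv.Perm (Fin n) //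
      1 ≤ p.1 ∧ p.1 ≤ n ∧ (cycleMins n p.2).card = k ∧
      (((cycleMins n p.2).sort (· ≤ ·)).map Fin.val).getD (p.1 - 1) n + 1 = p.1} =
    sodd n k := by
  have he : {p : ℕ × Equiv.Perm (Fin n) //
      1 ≤ p.1 ∧ p.1 ≤ n ∧ (cycleMins n p.2).card = k ∧
      (((cycleMins n p.2).sort (· ≤ ·)).map Fin.val).getD (p.1 - 1) n + 1 = p.1} ≃
      {p : ℕ × Equiv.Perm (Fin n) // p ∈ Sset n k} :=
    Equiv.subtypeEquivRight (fun p => by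
      have h := cond_iff n k p.1 p.2
      exact h)
  rw [Nat.card_congr he, Nat.card_eq_fintype_card, Fintype.card_coe, Sset_card]
end

section
/- S_odd(n, k) = Σ_{r=1}^{k} S_r(n, k), where S_r(n,k) is the r-Stirling number of the second kind counting partitions of {1,...,n} into k blocks such that 1, 2, ..., r lie in distinct blocks. -/
/-- The r-Stirling number of the second kind: the number of partitions of {1,...,n}
into k nonempty blocks such that 1, 2, ..., r lie in distinct blocks. -/
noncomputable def rStirling2 (r n k : ℕ) : ℕ :=
  Nat.card {π : Finpartition (Finset.Icc 1 n) //
    π.parts.card = k ∧ ∀ B ∈ π.parts, (B ∩ Finset.Icc 1 r).card ≤ 1}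

open Finset

section Aux

variable {α : Type*} [DecidableEq α] {a : α} {t : Finset α}

lemma part_subset_of_not_mem {s : Finset α} (π : Finpartition s) {d : Finset α}
    (hd : d ∈ π.parts) : d ⊆ s := π.le hd

/-- Insert `a` into the block `B` of a partition of `t`. -/
def insP (ha : a ∉ t) (π : Finpartition t) {B : Finset α} (hB : B ∈ π.parts) :
    Finpartition (insert a t) where
  parts := insert (insert a B) (π.parts.erase B)
  supIndep := by
    rw [Finset.supIndep_iff_pairwiseDisjoint]
    have key : ∀ d ∈ π.parts.erase B, Disjoint (insert a B) d := by
      intro d hd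
      rw [Finset.mem_erase] at hd
      rw [Finset.disjoint_insert_left]
      exact ⟨fun h => ha (π.le hd.2 h),
        π.disjoint hB (by exact_mod_cast hd.2) (fun h => hd.1 h.symm)⟩
    intro x hx y hy hxy
    simp only [coe_insert, Set.mem_insert_iff, mem_coe] at hx hy
    rcases hx with rfl | hx <;> rcases hy with rfl | hy
    · exact absurd rfl hxy
    · exact key y hy
    · exact (key x hx).symm
    · exact π.disjoint (Finset.mem_of_mem_erase hx) (Finset.mem_of_mem_erase hy) hxy
  sup_parts := by
    have h1 : B ⊔ (π.parts.erase B).sup id = t := by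
      have := π.sup_parts
      rw [← Finset.insert_erase hB, Finset.sup_insert] at this
      exact this
    rw [Finset.sup_insert]
    show insert a B ⊔ _ = _
    rw [Finset.sup_eq_union] at h1 ⊢
    rw [Finset.insert_union, h1]
  bot_notMem := by
    intro h
    rcases Finset.mem_insert.1 h with h | h
    · exact (Finset.insert_ne_empty _ _) h.symm
    · exact π.bot_notMem (Finset.mem_of_mem_erase h)

lemma insP_parts (ha : a ∉ t) (π : Finpartition t) {B : Finset α} (hB : B ∈ π.parts) :
    (insP ha π hB).parts = insert (insert a B) (π.parts.erase B) := rfl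

lemma insert_not_mem_erase (ha : a ∉ t) (π : Finpartition t) {B : Finset α}
    (hB : B ∈ π.parts) : insert a B ∉ π.parts.erase B := by
  intro h
  exact ha (π.le (Finset.mem_of_mem_erase h) (Finset.mem_insert_self a B))

lemma insP_card (ha : a ∉ t) (π : Finpartition t) {B : Finset α} (hB : B ∈ π.parts) :
    (insP ha π hB).parts.card = π.parts.card := by
  rw [insP_parts, Finset.card_insert_of_notMem (insert_not_mem_erase ha π hB),
    Finset.card_erase_of_mem hB]
  have : 0 < π.parts.card := Finset.card_pos.2 ⟨B, hB⟩
  omega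

lemma insert_sdiff_singleton (ha : a ∉ t) : insert a t \ {a} = t := by
  ext x
  simp only [Finset.mem_sdiff, Finset.mem_insert, Finset.mem_singleton]
  constructor
  · rintro ⟨rfl | hx, h2⟩
    · exact absurd rfl h2
    · exact hx
  · intro hx
    exact ⟨Or.inr hx, fun h => ha (h ▸ hx)⟩

/-- Delete `a` from a partition of `insert a t`. -/
def delP (ha : a ∉ t) (π : Finpartition (insert a t)) : Finpartition t :=
  (π.avoid {a}).copy (insert_sdiff_singleton ha)

lemma mem_delP (ha : a ∉ t) (π : Finpartition (insert a t)) {c : Finset α} :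
    c ∈ (delP ha π).parts ↔ ∃ d ∈ π.parts, ¬d ≤ {a} ∧ d \ {a} = c := by
  show c ∈ (π.avoid {a}).parts ↔ _
  exact π.mem_avoid

/-- Extend a partition of `t` by the singleton block `{a}`. -/
def extP (ha : a ∉ t) (π : Finpartition t) : Finpartition (insert a t) :=
  π.extend (b := ({a} : Finset α)) (Finset.singleton_ne_empty a)
    (Finset.disjoint_singleton_right.2 ha)
    (by rw [Finset.sup_eq_union]; ext x; simp [or_comm])

lemma extP_parts (ha : a ∉ t) (π : Finpartition t) :
    (extP ha π).parts = insert {a} π.parts := rfl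

lemma singleton_not_mem_parts (ha : a ∉ t) (π : Finpartition t) : {a} ∉ π.parts :=
  fun h => ha (π.le h (Finset.mem_singleton_self a))

lemma delP_parts_sing (ha : a ∉ t) (π : Finpartition (insert a t))
    (h : {a} ∈ π.parts) : (delP ha π).parts = π.parts.erase {a} := by
  ext c
  rw [mem_delP, Finset.mem_erase]
  constructor
  · rintro ⟨d, hd, hd2, rfl⟩
    have had : a ∉ d := by
      intro had
      exact hd2 ((π.eq_of_mem_parts hd h had (Finset.mem_singleton_self a)) ▸ le_refl _)
    rw [Finset.sdiff_singleton_eq_erase, Finset.erase_eq_of_notMem had]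
    refine ⟨fun hc => had (hc ▸ Finset.mem_singleton_self a), hd⟩
  · rintro ⟨hne, hc⟩
    have hca : a ∉ c := by
      intro hca
      exact hne (π.eq_of_mem_parts hc h hca (Finset.mem_singleton_self a))
    refine ⟨c, hc, ?_, ?_⟩
    · intro hle
      rcases Finset.subset_singleton_iff.1 hle with rfl | rfl
      · exact π.bot_notMem hc
      · exact hne rfl
    · rw [Finset.sdiff_singleton_eq_erase, Finset.erase_eq_of_notMem hca]

lemma delP_parts_nonsing (ha : a ∉ t) (π : Finpartition (insert a t))
    (h : {a} ∉ π.parts) :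
    (delP ha π).parts =
      insert ((π.part a).erase a) (π.parts.erase (π.part a)) := by
  have haa : a ∈ insert a t := Finset.mem_insert_self a t
  have hpm : π.part a ∈ π.parts := π.part_mem.2 haa
  have hap : a ∈ π.part a := π.mem_part haa
  ext c
  rw [mem_delP, Finset.mem_insert, Finset.mem_erase]
  constructor
  · rintro ⟨d, hd, hd2, rfl⟩
    by_cases had : a ∈ d
    · left
      rw [π.part_eq_of_mem hd had, Finset.sdiff_singleton_eq_erase]
    · right
      rw [Finset.sdiff_singleton_eq_erase, Finset.erase_eq_of_notMem had]
      exact ⟨fun hdp => had (hdp ▸ hap), hd⟩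
  · rintro (rfl | ⟨hne, hc⟩)
    · refine ⟨π.part a, hpm, ?_, ?_⟩
      · intro hle
        rcases Finset.subset_singleton_iff.1 hle with he | he
        · exact π.bot_notMem (show (∅ : Finset α) ∈ π.parts from he ▸ hpm)
        · exact h (he ▸ hpm)
      · rw [Finset.sdiff_singleton_eq_erase]
    · have hca : a ∉ c := fun hca => hne (π.part_eq_of_mem hc hca).symm
      refine ⟨c, hc, ?_, ?_⟩
      · intro hle
        rcases Finset.subset_singleton_iff.1 hle with rfl | rfl
        · exact π.bot_notMem hc
        · exact hca (Finset.mem_singleton_self a)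
      · rw [Finset.sdiff_singleton_eq_erase, Finset.erase_eq_of_notMem hca]

lemma part_erase_not_mem (ha : a ∉ t) (π : Finpartition (insert a t))
    (h : {a} ∉ π.parts) : (π.part a).erase a ∉ π.parts.erase (π.part a) := by
  have haa : a ∈ insert a t := Finset.mem_insert_self a t
  have hpm : π.part a ∈ π.parts := π.part_mem.2 haa
  have hap : a ∈ π.part a := π.mem_part haa
  intro hmem
  rw [Finset.mem_erase] at hmem
  have hne : ((π.part a).erase a).Nonempty := by
    by_contra hcon
    rw [Finset.not_nonempty_iff_eq_empty] at hcon
    have heq : π.part a = {a} := by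
      apply Finset.eq_singleton_iff_unique_mem.2 ⟨hap, ?_⟩
      intro x hx
      by_contra hxa
      have : x ∈ (π.part a).erase a := Finset.mem_erase.2 ⟨hxa, hx⟩
      rw [hcon] at this
      exact absurd this (Finset.notMem_empty x)
    exact h (heq ▸ hpm)
  rcases hne with ⟨x, hx⟩
  exact hmem.1 (π.eq_of_mem_parts hmem.2 hpm hx (Finset.mem_of_mem_erase hx))

lemma delP_card_sing (ha : a ∉ t) (π : Finpartition (insert a t))
    (h : {a} ∈ π.parts) : (delP ha π).parts.card = π.parts.card - 1 := by
  rw [delP_parts_sing ha π h, Finset.card_erase_of_mem h]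

lemma delP_card_nonsing (ha : a ∉ t) (π : Finpartition (insert a t))
    (h : {a} ∉ π.parts) : (delP ha π).parts.card = π.parts.card := by
  have haa : a ∈ insert a t := Finset.mem_insert_self a t
  have hpm : π.part a ∈ π.parts := π.part_mem.2 haa
  rw [delP_parts_nonsing ha π h,
    Finset.card_insert_of_notMem (part_erase_not_mem ha π h),
    Finset.card_erase_of_mem hpm]
  have : 0 < π.parts.card := Finset.card_pos.2 ⟨_, hpm⟩
  omega

variable {I : Finset α}

lemma cond_delP (ha : a ∉ t) (π : Finpartition (insert a t))
    (hc : ∀ B ∈ π.parts, (B ∩ I).card ≤ 1) :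
    ∀ B ∈ (delP ha π).parts, (B ∩ I).card ≤ 1 := by
  intro B hB
  rw [mem_delP] at hB
  rcases hB with ⟨d, hd, _, rfl⟩
  calc (d \ {a} ∩ I).card ≤ (d ∩ I).card :=
        Finset.card_le_card (Finset.inter_subset_inter Finset.sdiff_subset le_rfl)
    _ ≤ 1 := hc d hd

lemma cond_extP (ha : a ∉ t) (haI : a ∉ I) (π : Finpartition t)
    (hc : ∀ B ∈ π.parts, (B ∩ I).card ≤ 1) :
    ∀ B ∈ (extP ha π).parts, (B ∩ I).card ≤ 1 := by
  intro B hB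
  rw [extP_parts, Finset.mem_insert] at hB
  rcases hB with rfl | hB
  · rw [Finset.singleton_inter_of_notMem haI]
    simp
  · exact hc B hB

lemma cond_insP (ha : a ∉ t) (haI : a ∉ I) (π : Finpartition t) {B : Finset α}
    (hB : B ∈ π.parts) (hc : ∀ C ∈ π.parts, (C ∩ I).card ≤ 1) :
    ∀ C ∈ (insP ha π hB).parts, (C ∩ I).card ≤ 1 := by
  intro C hC
  rw [insP_parts, Finset.mem_insert] at hC
  rcases hC with rfl | hC
  · rw [Finset.insert_inter_of_notMem haI]
    exact hc B hB
  · exact hc C (Finset.mem_of_mem_erase hC)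

lemma delP_extP (ha : a ∉ t) (π : Finpartition t) : delP ha (extP ha π) = π := by
  apply Finpartition.ext
  rw [delP_parts_sing ha _ (by rw [extP_parts]; exact Finset.mem_insert_self _ _),
    extP_parts, Finset.erase_insert (singleton_not_mem_parts ha π)]

lemma extP_delP (ha : a ∉ t) (π : Finpartition (insert a t)) (h : {a} ∈ π.parts) :
    extP ha (delP ha π) = π := by
  apply Finpartition.ext
  rw [extP_parts, delP_parts_sing ha π h, Finset.insert_erase h]

lemma sing_not_mem_insP (ha : a ∉ t) (π : Finpartition t) {B : Finset α}
    (hB : B ∈ π.parts) : {a} ∉ (insP ha π hB).parts := by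
  rw [insP_parts, Finset.mem_insert]
  rintro (h | h)
  · rcases π.nonempty_of_mem_parts hB with ⟨x, hx⟩
    have hxa : x ≠ a := fun hxa => ha (hxa ▸ π.le hB hx)
    have : x ∈ ({a} : Finset α) := h ▸ Finset.mem_insert_of_mem hx
    exact hxa (Finset.mem_singleton.1 this)
  · exact singleton_not_mem_parts ha π (Finset.mem_of_mem_erase h)

lemma insP_part_a (ha : a ∉ t) (π : Finpartition t) {B : Finset α}
    (hB : B ∈ π.parts) : (insP ha π hB).part a = insert a B := by
  refine (insP ha π hB).part_eq_of_mem ?_ (Finset.mem_insert_self a B)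
  rw [insP_parts]
  exact Finset.mem_insert_self _ _

lemma delP_insP (ha : a ∉ t) (π : Finpartition t) {B : Finset α}
    (hB : B ∈ π.parts) : delP ha (insP ha π hB) = π := by
  apply Finpartition.ext
  have haB : a ∉ B := fun h => ha (π.le hB h)
  rw [delP_parts_nonsing ha _ (sing_not_mem_insP ha π hB), insP_part_a ha π hB,
    Finset.erase_insert haB, insP_parts,
    Finset.erase_insert (insert_not_mem_erase ha π hB), Finset.insert_erase hB]

lemma insP_delP (ha : a ∉ t) (π : Finpartition (insert a t)) (h : {a} ∉ π.parts)
    (hmem : (π.part a).erase a ∈ (delP ha π).parts) :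
    insP ha (delP ha π) hmem = π := by
  apply Finpartition.ext
  have haa : a ∈ insert a t := Finset.mem_insert_self a t
  have hpm : π.part a ∈ π.parts := π.part_mem.2 haa
  have hap : a ∈ π.part a := π.mem_part haa
  rw [insP_parts, Finset.insert_erase hap, delP_parts_nonsing ha π h,
    Finset.erase_insert (part_erase_not_mem ha π h), Finset.insert_erase hpm]

end Aux

section Count

variable {α : Type*} [DecidableEq α] {a : α} {t I : Finset α}

/-- The main bijection: partitions of `insert a t` into `k+1` blocks with the
separation condition correspond to either a partition of `t` into `k` blocks
(when `{a}` is a singleton block) or a partition of `t` into `k+1` blocks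
together with a chosen block (to which `a` is added). -/
noncomputable def mainEquiv (ha : a ∉ t) (haI : a ∉ I) (k : ℕ) :
    {π : Finpartition (insert a t) //
      π.parts.card = k + 1 ∧ ∀ B ∈ π.parts, (B ∩ I).card ≤ 1} ≃
    {π : Finpartition t // π.parts.card = k ∧ ∀ B ∈ π.parts, (B ∩ I).card ≤ 1} ⊕
    (Σ _π : {π : Finpartition t //
        π.parts.card = k + 1 ∧ ∀ B ∈ π.parts, (B ∩ I).card ≤ 1},
      {B // B ∈ _π.1.parts}) where
  toFun π :=
    if h : {a} ∈ π.1.parts then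
      Sum.inl ⟨delP ha π.1, by
          have h1 := delP_card_sing ha π.1 h; rw [π.2.1] at h1; omega,
        cond_delP ha π.1 π.2.2⟩
    else
      Sum.inr ⟨⟨delP ha π.1, by rw [delP_card_nonsing ha π.1 h, π.2.1],
        cond_delP ha π.1 π.2.2⟩,
        ⟨(π.1.part a).erase a, by
          rw [delP_parts_nonsing ha π.1 h]; exact Finset.mem_insert_self _ _⟩⟩
  invFun x :=
    x.elim
      (fun π => ⟨extP ha π.1, by
          rw [extP_parts, Finset.card_insert_of_notMem (singleton_not_mem_parts ha π.1),
            π.2.1], cond_extP ha haI π.1 π.2.2⟩)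
      (fun p => ⟨insP ha p.1.1 p.2.2, by
          rw [insP_card ha p.1.1 p.2.2, p.1.2.1], cond_insP ha haI p.1.1 p.2.2 p.1.2.2⟩)
  left_inv := by
    rintro ⟨π, hπ⟩
    by_cases h : {a} ∈ π.parts
    · dsimp only
      rw [dif_pos h]
      exact Subtype.ext (extP_delP ha π h)
    · dsimp only
      rw [dif_neg h]
      exact Subtype.ext (insP_delP ha π h
        (by rw [delP_parts_nonsing ha π h]; exact Finset.mem_insert_self _ _))
  right_inv := by
    rintro (⟨π, hπ⟩ | ⟨⟨π, hπ⟩, ⟨B, hB⟩⟩)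
    · dsimp only [Sum.elim_inl]
      rw [dif_pos (by rw [extP_parts]; exact Finset.mem_insert_self _ _)]
      exact congrArg Sum.inl (Subtype.ext (delP_extP ha π))
    · dsimp only [Sum.elim_inr]
      rw [dif_neg (sing_not_mem_insP ha π hB)]
      have hparts : delP ha (insP ha π hB) = π := delP_insP ha π hB
      have haB : a ∉ B := fun h => ha (π.le hB h)
      refine congrArg Sum.inr (Sigma.ext (Subtype.ext (delP_insP ha π hB)) ?_)
      refine (Subtype.heq_iff_coe_eq ?_).2 ?_
      · exact fun x => iff_of_eq (congrArg (fun P => x ∈ P.parts) hparts)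
      · show ((insP ha π hB).part a).erase a = B
        rw [insP_part_a ha π hB, Finset.erase_insert haB]

lemma main_count (ha : a ∉ t) (haI : a ∉ I) (k : ℕ) :
    Nat.card {π : Finpartition (insert a t) //
      π.parts.card = k + 1 ∧ ∀ B ∈ π.parts, (B ∩ I).card ≤ 1} =
    Nat.card {π : Finpartition t //
      π.parts.card = k ∧ ∀ B ∈ π.parts, (B ∩ I).card ≤ 1} +
    (k + 1) * Nat.card {π : Finpartition t //
      π.parts.card = k + 1 ∧ ∀ B ∈ π.parts, (B ∩ I).card ≤ 1} := by
  classical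
  rw [Nat.card_congr (mainEquiv ha haI k), Nat.card_sum]
  congr 1
  have e : (Σ _π : {π : Finpartition t //
        π.parts.card = k + 1 ∧ ∀ B ∈ π.parts, (B ∩ I).card ≤ 1},
        {B // B ∈ _π.1.parts}) ≃
      {π : Finpartition t //
        π.parts.card = k + 1 ∧ ∀ B ∈ π.parts, (B ∩ I).card ≤ 1} × Fin (k + 1) :=
    (Equiv.sigmaCongrRight (fun (π : {π : Finpartition t //
        π.parts.card = k + 1 ∧ ∀ B ∈ π.parts, (B ∩ I).card ≤ 1}) =>
      (Fintype.equivFinOfCardEq (by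
        rw [Fintype.card_coe]; exact π.2.1) : {B // B ∈ π.1.parts} ≃ Fin (k+1)))).trans
      (Equiv.sigmaEquivProd _ _)
  rw [Nat.card_congr e, Nat.card_prod]
  simp [Nat.card_eq_fintype_card, mul_comm]

end Count

section Stirling

lemma rS_zero {n k : ℕ} (h : n < k) (r : ℕ) : rStirling2 r n k = 0 := by
  rw [rStirling2]
  have : IsEmpty {π : Finpartition (Finset.Icc 1 n) //
      π.parts.card = k ∧ ∀ B ∈ π.parts, (B ∩ Finset.Icc 1 r).card ≤ 1} := by
    constructor
    rintro ⟨π, hπ, -⟩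
    have h1 : π.parts.card ≤ (Finset.Icc 1 n).card := π.card_parts_le_card
    rw [Nat.card_Icc] at h1
    omega
  exact Nat.card_of_isEmpty

lemma Sodd_zero : ∀ n k : ℕ, n < k → Sodd n k = 0 := by
  intro n
  induction n with
  | zero => intro k _; rfl
  | succ n ih =>
    intro k hk
    match k, hk with
    | k + 1, hk =>
      rw [Sodd, ih k (by omega), ih (k + 1) (by omega), if_neg (by omega)]
      simp

lemma rS_diag (r n : ℕ) : rStirling2 r n n = 1 := by
  rw [rStirling2]
  have hcard : (Finset.Icc 1 n).card = n := by rw [Nat.card_Icc]; omega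
  have hbot : ∀ π : Finpartition (Finset.Icc 1 n), π.parts.card = n → π = ⊥ := by
    intro π hπ
    have hsum := π.sum_card_parts
    rw [hcard] at hsum
    have hone : ∀ B ∈ π.parts, B.card = 1 := by
      by_contra hcon
      push_neg at hcon
      rcases hcon with ⟨B, hB, hBne⟩
      have h2 : 2 ≤ B.card := by
        have := Finset.card_pos.2 (π.nonempty_of_mem_parts hB)
        omega
      have hlt : ∑ _i ∈ π.parts, 1 < ∑ i ∈ π.parts, i.card := by
        refine Finset.sum_lt_sum (fun i hi => Finset.card_pos.2
          (π.nonempty_of_mem_parts hi)) ⟨B, hB, by omega⟩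
      rw [Finset.sum_const, smul_eq_mul, mul_one, hπ, hsum] at hlt
      omega
    apply Finpartition.ext
    ext B
    rw [Finpartition.mem_bot_iff]
    constructor
    · intro hB
      rcases Finset.card_eq_one.1 (hone B hB) with ⟨x, rfl⟩
      exact ⟨x, π.le hB (Finset.mem_singleton_self x), rfl⟩
    · rintro ⟨x, hx, rfl⟩
      have hpm := π.part_mem.2 hx
      have hxp := π.mem_part hx
      rcases Finset.card_eq_one.1 (hone _ hpm) with ⟨y, hy⟩
      rw [hy] at hxp
      rw [Finset.mem_singleton] at hxp
      subst hxp
      rw [← hy]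
      exact hpm
  have hb1 : (⊥ : Finpartition (Finset.Icc 1 n)).parts.card = n := by
    rw [Finpartition.card_bot, hcard]
  have hb2 : ∀ B ∈ (⊥ : Finpartition (Finset.Icc 1 n)).parts,
      (B ∩ Finset.Icc 1 r).card ≤ 1 := by
    intro B hB
    rw [Finpartition.mem_bot_iff] at hB
    rcases hB with ⟨x, -, rfl⟩
    exact le_trans (Finset.card_le_card (Finset.inter_subset_left))
      (by rw [Finset.card_singleton])
  rw [Nat.card_eq_one_iff_unique]
  constructor
  · constructor
    rintro ⟨π, hπ, -⟩ ⟨ρ, hρ, -⟩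
    exact Subtype.ext ((hbot π hπ).trans (hbot ρ hρ).symm)
  · exact ⟨⟨⊥, hb1, hb2⟩⟩

lemma rS_pigeon {n k : ℕ} (h : k < n) : rStirling2 (k + 1) n k = 0 := by
  rw [rStirling2]
  have : IsEmpty {π : Finpartition (Finset.Icc 1 n) //
      π.parts.card = k ∧ ∀ B ∈ π.parts, (B ∩ Finset.Icc 1 (k + 1)).card ≤ 1} := by
    constructor
    rintro ⟨π, hπ, hcond⟩
    have hsub : Finset.Icc 1 (k + 1) ⊆ Finset.Icc 1 n := by
      apply Finset.Icc_subset_Icc le_rfl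
      omega
    have hcard : (Finset.Icc 1 (k + 1)).card ≤ π.parts.card := by
      apply Finset.card_le_card_of_injOn π.part
      · intro i hi
        exact π.part_mem.2 (hsub hi)
      · intro i hi j hj hij
        have hi' : i ∈ π.part i := π.mem_part (hsub hi)
        have hj' : j ∈ π.part i := hij ▸ π.mem_part (hsub hj)
        have h1 : i ∈ π.part i ∩ Finset.Icc 1 (k + 1) := Finset.mem_inter.2 ⟨hi', hi⟩
        have h2 : j ∈ π.part i ∩ Finset.Icc 1 (k + 1) := Finset.mem_inter.2 ⟨hj', hj⟩
        exact Finset.card_le_one.1 (hcond _ (π.part_mem.2 (hsub hi))) i h1 j h2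
    rw [Nat.card_Icc] at hcard
    omega
  exact Nat.card_of_isEmpty

lemma rS_rec {r n : ℕ} (hr : r ≤ n) (k : ℕ) :
    rStirling2 r (n + 1) (k + 1) =
      rStirling2 r n k + (k + 1) * rStirling2 r n (k + 1) := by
  have hIcc : Finset.Icc 1 (n + 1) = insert (n + 1) (Finset.Icc 1 n) := by
    ext x
    simp only [Finset.mem_Icc, Finset.mem_insert]
    omega
  rw [rStirling2, rStirling2, rStirling2, hIcc]
  exact main_count (by simp) (by simp only [Finset.mem_Icc]; omega) k

end Stirling

/-- S_odd(n,k) = ∑_{r=1}^{k} S_r(n,k) where S_r is the r-Stirling number of the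
second kind. -/
theorem Sodd_eq_sum_rStirling (n k : ℕ) :
    Sodd n k = ∑ r ∈ Finset.Icc 1 k, rStirling2 r n k := by
  induction n generalizing k with
  | zero =>
    rcases Nat.eq_zero_or_pos k with rfl | hk
    · simp [Sodd]
    · rw [show Sodd 0 k = 0 from rfl, eq_comm]
      exact Finset.sum_eq_zero fun r hr => rS_zero (by
        rw [Finset.mem_Icc] at hr; omega) r
  | succ n ih =>
    match k with
    | 0 => simp [Sodd]
    | k + 1 =>
      rcases lt_trichotomy k n with hlt | rfl | hgt
      · rw [Sodd, if_neg (by omega)]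
        rw [Finset.sum_congr rfl (fun r hr => rS_rec (by
          rw [Finset.mem_Icc] at hr; omega) k)]
        rw [Finset.sum_add_distrib, ← Finset.mul_sum]
        rw [Finset.sum_Icc_succ_top (by omega : 1 ≤ k + 1)]
        rw [rS_pigeon hlt, add_zero, ih k, ih (k + 1)]
        ring
      · have h1 : Sodd (k + 1) (k + 1) = k + 1 := by
          rw [Sodd, if_pos rfl, Sodd_zero k (k + 1) (by omega), ih k]
          rw [Finset.sum_congr rfl (fun r _ => rS_diag r k), Finset.sum_const,
            smul_eq_mul, mul_one, Nat.card_Icc]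
          omega
        rw [h1, eq_comm,
          Finset.sum_congr rfl (fun r _ => rS_diag r (k + 1)), Finset.sum_const,
          smul_eq_mul, mul_one, Nat.card_Icc]
        omega
      · rw [Sodd_zero (n + 1) (k + 1) (by omega), eq_comm]
        exact Finset.sum_eq_zero fun r hr => rS_zero (by omega) r
end

section
/- For each t ≥ 1, S_t(n, k) equals the number of ordered t-tuples (π_1, ..., π_t) of partitions of {1,...,n} into k blocks such that all π_i have the same set of block minima. -/
/-- Generalized central factorial numbers of the second kind:
S_t(n,k) = S_t(n-1,k-1) + k^t·S_t(n-1,k), S_t(0,0) = 1, S_t(n,k) = 0 for n < k. -/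
def genS (t : ℕ) : ℕ → ℕ → ℕ
  | 0, 0 => 1
  | 0, _ + 1 => 0
  | n + 1, 0 => 0 ^ t * genS t n 0
  | n + 1, k + 1 => genS t n k + (k + 1) ^ t * genS t n (k + 1)

/-- Generalized central factorial numbers of the first kind:
s_t(n,k) = s_t(n-1,k-1) + (n-1)^t·s_t(n-1,k), s_t(0,0) = 1, s_t(n,k) = 0 for n < k. -/
def gens (t : ℕ) : ℕ → ℕ → ℕ
  | 0, 0 => 1
  | 0, _ + 1 => 0
  | n + 1, 0 => n ^ t * gens t n 0
  | n + 1, k + 1 => gens t n k + n ^ t * gens t n (k + 1)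

open Finset
namespace GenSAux


lemma finpart_finite (s : Finset ℕ) : Finite (Finpartition s) := by
  apply Finite.of_injective (fun P => (⟨P.parts, by
    simp only [Finset.mem_powerset]
    intro C hC
    simpa using P.le hC⟩ : ↥(s.powerset.powerset)))
  intro P Q h
  exact Finpartition.ext (congrArg Subtype.val h)

instance (s : Finset ℕ) : Finite (Finpartition s) := finpart_finite s

lemma icc_sdiff (n : ℕ) : Finset.Icc 1 (n+1) \ {n+1} = Finset.Icc 1 n := by
  ext x; simp only [mem_sdiff, mem_Icc, mem_singleton]; omega

/-- Remove the element `n+1` from a partition of `Icc 1 (n+1)`. -/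
def down {n : ℕ} (P : Finpartition (Finset.Icc 1 (n+1))) : Finpartition (Finset.Icc 1 n) :=
  (P.avoid {n+1}).copy (icc_sdiff n)

lemma down_parts {n : ℕ} (P : Finpartition (Finset.Icc 1 (n+1))) :
    (down P).parts = ((P.parts.image (· \ {n+1})).erase ∅) := rfl

lemma mem_down_parts {n : ℕ} (P : Finpartition (Finset.Icc 1 (n+1))) {C : Finset ℕ} :
    C ∈ (down P).parts ↔ ∃ D ∈ P.parts, ¬ D ⊆ {n+1} ∧ D \ {n+1} = C := by
  rw [down]
  simp only [Finpartition.copy_parts, Finpartition.mem_avoid, le_eq_subset]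

lemma part_subset {s : Finset ℕ} (P : Finpartition s) {C : Finset ℕ} (hC : C ∈ P.parts) :
    C ⊆ s := P.le hC

lemma mem_of_mem_part {s : Finset ℕ} (P : Finpartition s) {C : Finset ℕ} (hC : C ∈ P.parts)
    {x : ℕ} (hx : x ∈ C) : x ∈ s := part_subset P hC hx

/-- In a partition of `Icc 1 (n+1)`, a part containing `n+1` and equal to `{n+1}` iff singleton. -/
lemma eq_singleton_of_mem {n : ℕ} (P : Finpartition (Finset.Icc 1 (n+1)))
    {C : Finset ℕ} (hC : C ∈ P.parts) (hs : {n+1} ∈ P.parts) (hm : n+1 ∈ C) : C = {n+1} :=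
  P.eq_of_mem_parts hC hs hm (mem_singleton_self _)


lemma not_mem_part_of_ne {n : ℕ} (P : Finpartition (Finset.Icc 1 (n+1)))
    {C : Finset ℕ} (hC : C ∈ P.parts) (hne : C ≠ P.part (n+1)) : n+1 ∉ C := by
  intro hm
  exact hne (P.eq_of_mem_parts hC (P.part_mem.2 (by simp)) hm (P.mem_part (by simp)))

lemma down_parts_of_singleton {n : ℕ} (P : Finpartition (Finset.Icc 1 (n+1)))
    (hs : {n+1} ∈ P.parts) : (down P).parts = P.parts.erase {n+1} := by
  ext C
  rw [mem_down_parts, mem_erase]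
  constructor
  · rintro ⟨D, hD, hsub, rfl⟩
    have hne : D ≠ {n+1} := by rintro rfl; exact hsub (le_refl _)
    have hm : n+1 ∉ D := by
      intro hm
      exact hne (P.eq_of_mem_parts hD hs hm (mem_singleton_self _))
    rw [sdiff_singleton_eq_erase, erase_eq_of_notMem hm]
    exact ⟨hne, hD⟩
  · rintro ⟨hne, hC⟩
    have hm : n+1 ∉ C := by
      intro hm
      exact hne (P.eq_of_mem_parts hC hs hm (mem_singleton_self _))
    refine ⟨C, hC, ?_, by rw [sdiff_singleton_eq_erase, erase_eq_of_notMem hm]⟩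
    intro hsub
    obtain ⟨x, hx⟩ := P.nonempty_of_mem_parts hC
    have : x = n+1 := by simpa using hsub hx
    subst this
    exact hne (P.eq_of_mem_parts hC hs hx (mem_singleton_self _))

lemma down_parts_of_not_singleton {n : ℕ} (P : Finpartition (Finset.Icc 1 (n+1)))
    (hs : {n+1} ∉ P.parts) :
    (down P).parts = insert (P.part (n+1) \ {n+1}) (P.parts.erase (P.part (n+1))) := by
  have hmem : (n:ℕ)+1 ∈ Finset.Icc 1 (n+1) := by simp
  have hB0 : P.part (n+1) ∈ P.parts := P.part_mem.2 hmem
  have hmB0 : n+1 ∈ P.part (n+1) := P.mem_part hmem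
  have hB0ne : P.part (n+1) ≠ {n+1} := fun h => hs (h ▸ hB0)
  have hB0sd : (P.part (n+1) \ {n+1}).Nonempty := by
    rw [sdiff_singleton_eq_erase]
    by_contra h
    rw [not_nonempty_iff_eq_empty] at h
    apply hB0ne
    apply Finset.Subset.antisymm
    · intro x hx
      rcases eq_or_ne x (n+1) with rfl | hxne
      · exact mem_singleton_self _
      · exact absurd (mem_erase.2 ⟨hxne, hx⟩) (by simp [h])
    · simpa using hmB0
  ext C
  rw [mem_down_parts, mem_insert, mem_erase]
  constructor
  · rintro ⟨D, hD, hsub, rfl⟩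
    by_cases hDB : D = P.part (n+1)
    · left; rw [hDB]
    · have hm : n+1 ∉ D := by
        intro hm
        exact hDB (P.eq_of_mem_parts hD hB0 hm hmB0)
      right
      rw [sdiff_singleton_eq_erase, erase_eq_of_notMem hm]
      exact ⟨hDB, hD⟩
  · rintro (rfl | ⟨hne, hC⟩)
    · exact ⟨P.part (n+1), hB0, fun hsub => by
        obtain ⟨x, hx⟩ := hB0sd
        have := hsub (mem_sdiff.1 hx).1
        simp only [mem_singleton] at this
        exact (mem_sdiff.1 hx).2 (this ▸ mem_singleton_self _), rfl⟩
    · have hm : n+1 ∉ C := by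
        intro hm
        exact hne (P.eq_of_mem_parts hC hB0 hm hmB0)
      refine ⟨C, hC, ?_, by rw [sdiff_singleton_eq_erase, erase_eq_of_notMem hm]⟩
      intro hsub
      obtain ⟨x, hx⟩ := P.nonempty_of_mem_parts hC
      have : x = n+1 := by simpa using hsub hx
      exact hm (this ▸ hx)


lemma min_insert_top {n : ℕ} {B : Finset ℕ} (hB : B.Nonempty) (hsub : B ⊆ Finset.Icc 1 n) :
    (insert (n+1) B).min = B.min := by
  rw [Finset.min_insert]
  obtain ⟨x, hx⟩ := hB
  refine min_eq_right (le_trans (Finset.min_le hx) ?_)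
  have hxn : x ≤ n := (mem_Icc.1 (hsub hx)).2
  exact_mod_cast Nat.le_succ_of_le hxn

lemma min_sdiff_top {n : ℕ} {B : Finset ℕ} (hsub : B ⊆ Finset.Icc 1 (n+1)) (hm : n+1 ∈ B)
    (hB : (B \ {n+1}).Nonempty) : (B \ {n+1}).min = B.min := by
  have hins : insert (n+1) (B \ {n+1}) = B := by
    rw [sdiff_singleton_eq_erase, insert_erase hm]
  conv_rhs => rw [← hins]
  rw [Finset.min_insert]
  obtain ⟨x, hx⟩ := hB
  refine (min_eq_right (le_trans (Finset.min_le hx) ?_)).symm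
  have hxn : x ≤ n+1 := (mem_Icc.1 (hsub (mem_sdiff.1 hx).1)).2
  exact_mod_cast hxn

lemma part_eq_singleton_of_min {n : ℕ} (P : Finpartition (Finset.Icc 1 (n+1)))
    {C : Finset ℕ} (hC : C ∈ P.parts) (hmin : C.min = ((n+1 : ℕ) : WithTop ℕ)) :
    C = {n+1} := by
  have hmC : n+1 ∈ C := Finset.mem_of_min hmin
  apply Finset.Subset.antisymm
  · intro x hx
    have h1 : x ≤ n+1 := (mem_Icc.1 (P.le hC hx)).2
    have h2 : ((n+1:ℕ) : WithTop ℕ) ≤ (x : WithTop ℕ) := hmin ▸ Finset.min_le hx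
    have h2' : n+1 ≤ x := by exact_mod_cast h2
    simp [le_antisymm h1 h2']
  · simpa using hmC

lemma singleton_mem_iff_min {n : ℕ} (P : Finpartition (Finset.Icc 1 (n+1))) :
    {n+1} ∈ P.parts ↔ ((n+1 : ℕ) : WithTop ℕ) ∈ P.parts.image Finset.min := by
  constructor
  · intro h
    exact mem_image.2 ⟨{n+1}, h, Finset.min_singleton⟩
  · intro h
    obtain ⟨C, hC, hmin⟩ := mem_image.1 h
    exact (part_eq_singleton_of_min P hC hmin) ▸ hC


lemma part_sdiff_nonempty {n : ℕ} (P : Finpartition (Finset.Icc 1 (n+1)))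
    (hs : {n+1} ∉ P.parts) : (P.part (n+1) \ {n+1}).Nonempty := by
  have hmem : (n:ℕ)+1 ∈ Finset.Icc 1 (n+1) := by simp
  have hB0 : P.part (n+1) ∈ P.parts := P.part_mem.2 hmem
  have hmB0 : n+1 ∈ P.part (n+1) := P.mem_part hmem
  have hB0ne : P.part (n+1) ≠ {n+1} := fun h => hs (h ▸ hB0)
  rw [sdiff_singleton_eq_erase]
  by_contra h
  rw [not_nonempty_iff_eq_empty] at h
  apply hB0ne
  apply Finset.Subset.antisymm
  · intro x hx
    rcases eq_or_ne x (n+1) with rfl | hxne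
    · exact mem_singleton_self _
    · exact absurd (mem_erase.2 ⟨hxne, hx⟩) (by simp [h])
  · simpa using hmB0

lemma card_down_singleton {n : ℕ} (P : Finpartition (Finset.Icc 1 (n+1)))
    (hs : {n+1} ∈ P.parts) : (down P).parts.card = P.parts.card - 1 := by
  rw [down_parts_of_singleton P hs, card_erase_of_mem hs]

lemma sdiff_not_mem_parts {n : ℕ} (P : Finpartition (Finset.Icc 1 (n+1)))
    (hs : {n+1} ∉ P.parts) : P.part (n+1) \ {n+1} ∉ P.parts := by
  intro h
  have hmem : (n:ℕ)+1 ∈ Finset.Icc 1 (n+1) := by simp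
  have hB0 : P.part (n+1) ∈ P.parts := P.part_mem.2 hmem
  obtain ⟨x, hx⟩ := part_sdiff_nonempty P hs
  have hx1 := (mem_sdiff.1 hx).1
  have heq : P.part (n+1) \ {n+1} = P.part (n+1) := P.eq_of_mem_parts h hB0 hx hx1
  have hmB0 : n+1 ∈ P.part (n+1) := P.mem_part hmem
  have : n+1 ∈ P.part (n+1) \ {n+1} := by rw [heq]; exact hmB0
  simp at this

lemma card_down_not_singleton {n : ℕ} (P : Finpartition (Finset.Icc 1 (n+1)))
    (hs : {n+1} ∉ P.parts) : (down P).parts.card = P.parts.card := by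
  have hmem : (n:ℕ)+1 ∈ Finset.Icc 1 (n+1) := by simp
  have hB0 : P.part (n+1) ∈ P.parts := P.part_mem.2 hmem
  rw [down_parts_of_not_singleton P hs, card_insert_of_notMem
    (fun h => sdiff_not_mem_parts P hs (mem_of_mem_erase h)), card_erase_of_mem hB0]
  have : 1 ≤ P.parts.card := card_pos.2 ⟨_, hB0⟩
  omega

lemma min_image_down_singleton {n : ℕ} (P : Finpartition (Finset.Icc 1 (n+1)))
    (hs : {n+1} ∈ P.parts) :
    (down P).parts.image Finset.min = (P.parts.image Finset.min).erase ((n+1 : ℕ) : WithTop ℕ) := by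
  rw [down_parts_of_singleton P hs]
  ext v
  simp only [mem_image, mem_erase]
  constructor
  · rintro ⟨C, ⟨hne, hC⟩, rfl⟩
    exact ⟨fun h => hne (part_eq_singleton_of_min P hC h), C, hC, rfl⟩
  · rintro ⟨hvne, C, hC, rfl⟩
    refine ⟨C, ⟨?_, hC⟩, rfl⟩
    rintro rfl
    exact hvne Finset.min_singleton

lemma min_image_down_not_singleton {n : ℕ} (P : Finpartition (Finset.Icc 1 (n+1)))
    (hs : {n+1} ∉ P.parts) :
    (down P).parts.image Finset.min = P.parts.image Finset.min := by
  have hmem : (n:ℕ)+1 ∈ Finset.Icc 1 (n+1) := by simp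
  have hB0 : P.part (n+1) ∈ P.parts := P.part_mem.2 hmem
  have hmB0 : n+1 ∈ P.part (n+1) := P.mem_part hmem
  rw [down_parts_of_not_singleton P hs, image_insert,
    min_sdiff_top (P.le hB0) hmB0 (part_sdiff_nonempty P hs)]
  conv_rhs => rw [← insert_erase hB0, image_insert]

lemma singleton_not_mem {n : ℕ} (P : Finpartition (Finset.Icc 1 n)) :
    ({n+1} : Finset ℕ) ∉ P.parts := by
  intro h
  have := P.le h (mem_singleton_self _)
  rw [mem_Icc] at this
  omega

/-- Add `{n+1}` as a new singleton part. -/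
def up1 {n : ℕ} (P : Finpartition (Finset.Icc 1 n)) : Finpartition (Finset.Icc 1 (n+1)) :=
  P.extend (b := {n+1}) (by simp)
    (Finset.disjoint_singleton_right.2 (by simp))
    (by ext x; simp only [sup_eq_union, mem_union, mem_Icc, mem_singleton]; omega)

lemma up1_parts {n : ℕ} (P : Finpartition (Finset.Icc 1 n)) :
    (up1 P).parts = insert {n+1} P.parts := rfl

lemma card_up1 {n : ℕ} (P : Finpartition (Finset.Icc 1 n)) :
    (up1 P).parts.card = P.parts.card + 1 := by
  rw [up1_parts, card_insert_of_notMem (singleton_not_mem P)]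

lemma min_image_up1 {n : ℕ} (P : Finpartition (Finset.Icc 1 n)) :
    (up1 P).parts.image Finset.min
      = insert ((n+1 : ℕ) : WithTop ℕ) (P.parts.image Finset.min) := by
  rw [up1_parts, image_insert, Finset.min_singleton]
  norm_cast

/-- Add `n+1` to the part `B`. -/
def up2 {n : ℕ} (P : Finpartition (Finset.Icc 1 n)) {B : Finset ℕ} (hB : B ∈ P.parts) :
    Finpartition (Finset.Icc 1 (n+1)) where
  parts := insert (insert (n+1) B) (P.parts.erase B)
  supIndep := by
    rw [Finset.supIndep_iff_pairwiseDisjoint, coe_insert]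
    apply Set.PairwiseDisjoint.insert
    · exact P.disjoint.subset (by exact_mod_cast erase_subset _ _)
    · intro D hD _
      rw [Finset.mem_coe, mem_erase] at hD
      have hDB : Disjoint B D := P.disjoint hB hD.2 hD.1.symm
      refine Finset.disjoint_insert_left.2 ⟨?_, hDB⟩
      intro hmD
      have := P.le hD.2 hmD
      rw [mem_Icc] at this
      omega
  sup_parts := by
    have h : (B : Finset ℕ) ⊔ (P.parts.erase B).sup id = Finset.Icc 1 n := by
      have := congrArg (Finset.sup · id) (insert_erase hB)
      simpa [Finset.sup_insert, P.sup_parts] using this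
    rw [Finset.sup_insert]
    show insert (n+1) B ⊔ (P.parts.erase B).sup id = _
    rw [sup_eq_union, insert_union, ← sup_eq_union, h]
    ext x
    simp only [mem_insert, mem_Icc]
    omega
  bot_notMem := by
    simp only [bot_eq_empty, mem_insert, not_or]
    refine ⟨fun h => (insert_nonempty _ _).ne_empty h.symm, fun h => P.bot_notMem (mem_of_mem_erase h)⟩

lemma up2_parts {n : ℕ} (P : Finpartition (Finset.Icc 1 n)) {B : Finset ℕ} (hB : B ∈ P.parts) :
    (up2 P hB).parts = insert (insert (n+1) B) (P.parts.erase B) := rfl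

lemma insert_not_mem_erase {n : ℕ} (P : Finpartition (Finset.Icc 1 n)) {B : Finset ℕ} :
    insert (n+1) B ∉ P.parts.erase B := by
  intro h
  have := P.le (mem_of_mem_erase h) (mem_insert_self _ _)
  rw [mem_Icc] at this
  omega

lemma card_up2 {n : ℕ} (P : Finpartition (Finset.Icc 1 n)) {B : Finset ℕ} (hB : B ∈ P.parts) :
    (up2 P hB).parts.card = P.parts.card := by
  rw [up2_parts, card_insert_of_notMem (insert_not_mem_erase P), card_erase_of_mem hB]
  have : 1 ≤ P.parts.card := card_pos.2 ⟨_, hB⟩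
  omega

lemma min_image_up2 {n : ℕ} (P : Finpartition (Finset.Icc 1 n)) {B : Finset ℕ} (hB : B ∈ P.parts) :
    (up2 P hB).parts.image Finset.min = P.parts.image Finset.min := by
  rw [up2_parts, image_insert, min_insert_top (P.nonempty_of_mem_parts hB) (P.le hB)]
  conv_rhs => rw [← insert_erase hB, image_insert]

lemma singleton_not_mem_up2 {n : ℕ} (P : Finpartition (Finset.Icc 1 n)) {B : Finset ℕ}
    (hB : B ∈ P.parts) : ({n+1} : Finset ℕ) ∉ (up2 P hB).parts := by
  rw [up2_parts, mem_insert]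
  push_neg
  constructor
  · intro h
    obtain ⟨x, hx⟩ := P.nonempty_of_mem_parts hB
    have hxn := (mem_Icc.1 (P.le hB hx)).2
    have : x ∈ ({n+1} : Finset ℕ) := h ▸ mem_insert_of_mem hx
    rw [mem_singleton] at this
    omega
  · intro h
    have := P.le (mem_of_mem_erase h) (mem_singleton_self _)
    rw [mem_Icc] at this
    omega

lemma down_up1 {n : ℕ} (P : Finpartition (Finset.Icc 1 n)) : down (up1 P) = P := by
  apply Finpartition.ext
  rw [down_parts_of_singleton _ (by rw [up1_parts]; exact mem_insert_self _ _), up1_parts,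
    erase_insert (singleton_not_mem P)]

lemma not_mem_of_subset_Icc {n : ℕ} {B : Finset ℕ} (h : B ⊆ Finset.Icc 1 n) : n+1 ∉ B := by
  intro hx
  have := mem_Icc.1 (h hx)
  omega

lemma down_up2 {n : ℕ} (P : Finpartition (Finset.Icc 1 n)) {B : Finset ℕ} (hB : B ∈ P.parts) :
    down (up2 P hB) = P := by
  apply Finpartition.ext
  have hins : insert (n+1) B ∈ (up2 P hB).parts := by
    rw [up2_parts]; exact mem_insert_self _ _
  have hpart : (up2 P hB).part (n+1) = insert (n+1) B :=
    Finpartition.part_eq_of_mem _ hins (mem_insert_self _ _)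
  rw [down_parts_of_not_singleton _ (singleton_not_mem_up2 P hB), hpart, up2_parts]
  have hnB : n+1 ∉ B := not_mem_of_subset_Icc (P.le hB)
  have h1 : insert (n+1) B \ {n+1} = B := by
    rw [sdiff_singleton_eq_erase, erase_insert hnB]
  rw [h1, Finset.erase_insert (insert_not_mem_erase P), insert_erase hB]

lemma up1_down {n : ℕ} (Q : Finpartition (Finset.Icc 1 (n+1)))
    (hs : {n+1} ∈ Q.parts) : up1 (down Q) = Q := by
  apply Finpartition.ext
  rw [up1_parts, down_parts_of_singleton Q hs, insert_erase hs]

lemma sdiff_mem_down {n : ℕ} (Q : Finpartition (Finset.Icc 1 (n+1)))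
    (hs : {n+1} ∉ Q.parts) : Q.part (n+1) \ {n+1} ∈ (down Q).parts := by
  rw [down_parts_of_not_singleton Q hs]
  exact mem_insert_self _ _

lemma up2_down {n : ℕ} (Q : Finpartition (Finset.Icc 1 (n+1)))
    (hs : {n+1} ∉ Q.parts) : up2 (down Q) (sdiff_mem_down Q hs) = Q := by
  apply Finpartition.ext
  have hmem : (n:ℕ)+1 ∈ Finset.Icc 1 (n+1) := by simp
  have hB0 : Q.part (n+1) ∈ Q.parts := Q.part_mem.2 hmem
  have hmB0 : n+1 ∈ Q.part (n+1) := Q.mem_part hmem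
  rw [up2_parts, down_parts_of_not_singleton Q hs]
  have h1 : insert (n+1) (Q.part (n+1) \ {n+1}) = Q.part (n+1) := by
    rw [sdiff_singleton_eq_erase, insert_erase hmB0]
  have h2 : Q.part (n+1) \ {n+1} ∉ Q.parts.erase (Q.part (n+1)) :=
    fun h => sdiff_not_mem_parts Q hs (mem_of_mem_erase h)
  rw [h1, Finset.erase_insert h2, insert_erase hB0]

abbrev T (t n k : ℕ) := {f : Fin t → Finpartition (Finset.Icc 1 n) //
      (∀ i, (f i).parts.card = k) ∧
      (∀ i j, (f i).parts.image Finset.min = (f j).parts.image Finset.min)}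

lemma parts_eq_empty (P : Finpartition (Finset.Icc 1 0)) : P.parts = ∅ := by
  rw [Finpartition.parts_eq_empty_iff]
  ext x
  simp only [mem_Icc, bot_eq_empty, notMem_empty, iff_false]
  omega

lemma card_T_zero_zero (t : ℕ) : Nat.card (T t 0 0) = 1 := by
  have hbot : (⊥ : Finset ℕ) = Finset.Icc 1 0 := by
    ext x; simp only [bot_eq_empty, notMem_empty, mem_Icc, false_iff]; omega
  have : Unique (T t 0 0) := by
    refine ⟨⟨⟨fun _ => (Finpartition.empty (Finset ℕ)).copy hbot, ?_, ?_⟩⟩, ?_⟩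
    · intro i; rw [parts_eq_empty]; exact card_empty
    · intro i j; rw [parts_eq_empty ((fun _ => (Finpartition.empty (Finset ℕ)).copy hbot) i)]
    · rintro ⟨f, hf⟩
      apply Subtype.ext
      funext i
      apply Finpartition.ext
      rw [parts_eq_empty, parts_eq_empty]
  exact Nat.card_unique

lemma card_T_zero_succ (t k : ℕ) (ht : 1 ≤ t) : Nat.card (T t 0 (k+1)) = 0 := by
  have : IsEmpty (T t 0 (k+1)) := by
    refine ⟨fun f => ?_⟩
    have := f.2.1 ⟨0, ht⟩
    rw [parts_eq_empty] at this
    simp at this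
  exact Nat.card_of_isEmpty

lemma card_T_succ_zero (t n : ℕ) (ht : 1 ≤ t) : Nat.card (T t (n+1) 0) = 0 := by
  have : IsEmpty (T t (n+1) 0) := by
    refine ⟨fun f => ?_⟩
    have h0 := f.2.1 ⟨0, ht⟩
    rw [Finset.card_eq_zero, Finpartition.parts_eq_empty_iff] at h0
    have : (1 : ℕ) ∈ Finset.Icc 1 (n+1) := by simp
    rw [h0] at this
    simp at this
  exact Nat.card_of_isEmpty

lemma part_top_up2 {n : ℕ} (P : Finpartition (Finset.Icc 1 n)) {B : Finset ℕ}
    (hB : B ∈ P.parts) : (up2 P hB).part (n+1) = insert (n+1) B :=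
  Finpartition.part_eq_of_mem _ (by rw [up2_parts]; exact mem_insert_self _ _)
    (mem_insert_self _ _)

lemma card_T_succ (t n k : ℕ) (ht : 1 ≤ t) :
    Nat.card (T t (n+1) (k+1))
      = Nat.card (T t n k) + (k+1)^t * Nat.card (T t n (k+1)) := by
  classical
  set i0 : Fin t := ⟨0, ht⟩ with hi0
  set p : T t (n+1) (k+1) → Prop := fun f => {n+1} ∈ (f.1 i0).parts with hp
  -- transfer of the singleton condition between indices
  have htrans : ∀ (f : T t (n+1) (k+1)) (i : Fin t),
      ({n+1} ∈ (f.1 i0).parts ↔ {n+1} ∈ (f.1 i).parts) := by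
    intro f i
    rw [singleton_mem_iff_min, singleton_mem_iff_min, f.2.2 i0 i]
  -- the two pieces
  have e0 : T t (n+1) (k+1) ≃ {f : T t (n+1) (k+1) // p f} ⊕ {f : T t (n+1) (k+1) // ¬ p f} :=
    (Equiv.sumCompl p).symm
  -- piece A
  have eA : {f : T t (n+1) (k+1) // p f} ≃ T t n k :=
    { toFun := fun fp =>
        ⟨fun i => down (fp.1.1 i),
          fun i => by
            rw [card_down_singleton _ ((htrans fp.1 i).1 fp.2), fp.1.2.1 i]; omega,
          fun i j => by
            rw [min_image_down_singleton _ ((htrans fp.1 i).1 fp.2),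
              min_image_down_singleton _ ((htrans fp.1 j).1 fp.2), fp.1.2.2 i j]⟩
      invFun := fun g =>
        ⟨⟨fun i => up1 (g.1 i),
          fun i => by rw [card_up1, g.2.1 i],
          fun i j => by rw [min_image_up1, min_image_up1, g.2.2 i j]⟩,
          by show {n+1} ∈ _; rw [up1_parts]; exact mem_insert_self _ _⟩
      left_inv := fun fp => by
        apply Subtype.ext
        apply Subtype.ext
        funext i
        exact up1_down _ ((htrans fp.1 i).1 fp.2)
      right_inv := fun g => by
        apply Subtype.ext
        funext i
        exact down_up1 _ }
  -- piece B
  have eB : {f : T t (n+1) (k+1) // ¬ p f} ≃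
      {x : T t n (k+1) × (Fin t → Finset ℕ) // ∀ i, x.2 i ∈ (x.1.1 i).parts} :=
    { toFun := fun fp =>
        ⟨(⟨fun i => down (fp.1.1 i),
          fun i => by
            rw [card_down_not_singleton _ (fun h => fp.2 ((htrans fp.1 i).2 h)), fp.1.2.1 i],
          fun i j => by
            rw [min_image_down_not_singleton _ (fun h => fp.2 ((htrans fp.1 i).2 h)),
              min_image_down_not_singleton _ (fun h => fp.2 ((htrans fp.1 j).2 h)),
              fp.1.2.2 i j]⟩,
          fun i => (fp.1.1 i).part (n+1) \ {n+1}),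
          fun i => sdiff_mem_down _ (fun h => fp.2 ((htrans fp.1 i).2 h))⟩
      invFun := fun x =>
        ⟨⟨fun i => up2 (x.1.1.1 i) (x.2 i),
          fun i => by rw [card_up2, x.1.1.2.1 i],
          fun i j => by rw [min_image_up2, min_image_up2, x.1.1.2.2 i j]⟩,
          fun h => singleton_not_mem_up2 (x.1.1.1 i0) (x.2 i0) h⟩
      left_inv := fun fp => by
        apply Subtype.ext
        apply Subtype.ext
        funext i
        exact up2_down _ (fun h => fp.2 ((htrans fp.1 i).2 h))
      right_inv := fun x => by
        obtain ⟨⟨g, c⟩, hc⟩ := x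
        apply Subtype.ext
        dsimp only
        rw [Prod.ext_iff]
        constructor
        · apply Subtype.ext
          funext i
          exact down_up2 _ (hc i)
        · funext i
          show (up2 (g.1 i) (hc i)).part (n+1) \ {n+1} = c i
          rw [part_top_up2, sdiff_singleton_eq_erase]
          have hle : c i ⊆ Finset.Icc 1 n := (g.1 i).le (hc i)
          exact erase_insert (not_mem_of_subset_Icc hle) }
  -- counting the B side
  have eFin : ∀ g : T t n (k+1),
      {c : Fin t → Finset ℕ // ∀ i, c i ∈ (g.1 i).parts} ≃ Fin ((k+1)^t) := fun g =>
    (Equiv.subtypePiEquivPi).trans (Fintype.equivFinOfCardEq (by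
      rw [Fintype.card_pi]
      have hcb : ∀ i : Fin t, Fintype.card {B // B ∈ (g.1 i).parts} = k+1 := fun i => by
        rw [Fintype.card_coe]
        exact g.2.1 i
      rw [Finset.prod_congr rfl (fun i _ => hcb i), Finset.prod_const, Finset.card_univ,
        Fintype.card_fin]))
  have eB2 : {x : T t n (k+1) × (Fin t → Finset ℕ) // ∀ i, x.2 i ∈ (x.1.1 i).parts}
      ≃ T t n (k+1) × Fin ((k+1)^t) :=
    (Equiv.subtypeProdEquivSigmaSubtype _).trans
      ((Equiv.sigmaCongrRight eFin).trans (Equiv.sigmaEquivProd _ _))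
  rw [Nat.card_congr e0, Nat.card_sum, Nat.card_congr eA, Nat.card_congr (eB.trans eB2),
    Nat.card_prod]
  simp only [Nat.card_eq_fintype_card, Fintype.card_fin]
  ring


end GenSAux

/-- S_t(n,k) is the number of ordered t-tuples (π_1,...,π_t) of partitions of {1,...,n}
into k blocks all having the same set of block minima. -/
theorem genS_eq_tuples_of_partitions (t n k : ℕ) (ht : 1 ≤ t) :
    Nat.card {f : Fin t → Finpartition (Finset.Icc 1 n) //
      (∀ i, (f i).parts.card = k) ∧
      (∀ i j, (f i).parts.image Finset.min = (f j).parts.image Finset.min)} =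
    genS t n k := by
  induction n generalizing k with
  | zero =>
    cases k with
    | zero =>
      rw [show genS t 0 0 = 1 by simp [genS]]
      exact GenSAux.card_T_zero_zero t
    | succ k =>
      rw [show genS t 0 (k+1) = 0 by simp [genS]]
      exact GenSAux.card_T_zero_succ t k ht
  | succ n ih =>
    cases k with
    | zero =>
      have h0 : genS t (n+1) 0 = 0 ^ t * genS t n 0 := rfl
      rw [h0, zero_pow (by omega : t ≠ 0), zero_mul]
      exact GenSAux.card_T_succ_zero t n ht
    | succ k =>
      have h0 : genS t (n+1) (k+1) = genS t n k + (k + 1) ^ t * genS t n (k + 1) := rfl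
      rw [h0, ← ih k, ← ih (k+1)]
      exact GenSAux.card_T_succ t n k ht
end

section
/- If k = (1, ..., 1, 2) (n-1 ones followed by a 2), then B_k(m) = Σ_{i=1}^{m} i^n and b_k(m) = Σ_{i=1}^{m-1} i^n for all positive integers m. -/
open Finset

/-- The multiset {1^{k 0}, 2^{k 1}, ..., n^{k (n-1)}}. -/
def multisetOf (k : ℕ → ℕ) (n : ℕ) : Multiset ℕ :=
  ∑ i ∈ Finset.range n, Multiset.replicate (k i) (i + 1)

/-- A word is a Stirling permutation: between two equal letters, all letters are ≥. -/
def IsStirlingPerm (w : List ℕ) : Prop :=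
  ∀ i s j : ℕ, i < s → s < j → j < w.length →
    w.getD i 0 = w.getD j 0 → w.getD i 0 ≤ w.getD s 0

/-- Number of descents of a word: indices i (0-based, i < K-1) with w i > w (i+1),
together with the last index. -/
def descents (w : List ℕ) : ℕ :=
  ((Finset.range (w.length - 1)).filter fun i => w.getD (i + 1) 0 < w.getD i 0).card + 1

/-- Eulerian numbers A_{k,i}: number of Stirling permutations of {1^{k_1},...,n^{k_n}}
with exactly i descents. -/
noncomputable def eulerianA (k : ℕ → ℕ) (n i : ℕ) : ℕ :=
  Nat.card {w : List ℕ //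
    (↑w : Multiset ℕ) = multisetOf k n ∧ IsStirlingPerm w ∧ descents w = i}

/-- K = k_1 + ... + k_n. -/
def bigK (k : ℕ → ℕ) (n : ℕ) : ℕ := ∑ i ∈ Finset.range n, k i

/-- B_k(m): the coefficient of x^m in (∑_{i=1}^n A_{k,i} x^i)/(1-x)^{K+1}. -/
noncomputable def Bpoly (k : ℕ → ℕ) (n m : ℕ) : ℕ :=
  ∑ i ∈ Finset.Icc 1 n, eulerianA k n i * Nat.choose (bigK k n + m - i) (bigK k n)

/-- b_k(m): the coefficient of x^m in (∑_{i=K-n+1}^{K} A_{k,K+1-i} x^i)/(1-x)^{K+1}. -/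
noncomputable def bpoly (k : ℕ → ℕ) (n m : ℕ) : ℕ :=
  ∑ i ∈ Finset.Icc (bigK k n - n + 1) (bigK k n),
    eulerianA k n (bigK k n + 1 - i) * Nat.choose (bigK k n + m - i) (bigK k n)


-- ========== auxiliary development ==========

/-- Recursive count of proper descents. -/
def dsc : List ℕ → ℕ
  | [] => 0
  | [_] => 0
  | a :: b :: t => (if b < a then 1 else 0) + dsc (b :: t)

lemma dsc_cons (a : ℕ) (L : List ℕ) :
    dsc (a :: L) = dsc L + (if 0 < L.length ∧ L.getD 0 0 < a then 1 else 0) := by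
  cases L with
  | nil => simp [dsc]
  | cons b t => simp [dsc]; omega

lemma dsc_eq_card (w : List ℕ) :
    ((Finset.range (w.length - 1)).filter fun i => w.getD (i + 1) 0 < w.getD i 0).card = dsc w := by
  induction w using dsc.induct with
  | case1 => simp [dsc]
  | case2 a => simp [dsc]
  | case3 a b t ih =>
    rw [Finset.card_filter] at ih ⊢
    simp only [List.length_cons, Nat.add_sub_cancel] at ih ⊢
    rw [Finset.sum_range_succ']
    simp only [List.getD_cons_succ, List.getD_cons_zero] at ih ⊢
    rw [ih, dsc]
    omega

lemma dsc_dup (x : ℕ) (B : List ℕ) : ∀ A : List ℕ, dsc (A ++ x :: x :: B) = dsc (A ++ x :: B) := by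
  intro A
  induction A with
  | nil => simp [dsc]
  | cons a A ih =>
    cases A with
    | nil => simp [dsc]
    | cons a' A' =>
      simp only [List.cons_append, List.append_eq, dsc] at ih ⊢
      omega

lemma two_pos_count (l : List ℕ) (i j : ℕ) (hij : i < j) (hj : j < l.length)
    (he : l.getD i 0 = l.getD j 0) : 2 ≤ l.count (l.getD i 0) := by
  have hi : i < l.length := lt_trans hij hj
  rw [List.getD_eq_getElem l 0 hi] at he ⊢
  have h1 : l[i] ∈ l.take (i+1) := by
    have hlen : i < (l.take (i+1)).length := by
      rw [List.length_take]; omega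
    have : (l.take (i+1))[i] = l[i] := List.getElem_take
    rw [← this]; exact List.getElem_mem hlen
  have h2 : l[i] ∈ l.drop (i+1) := by
    have hlen : j - (i+1) < (l.drop (i+1)).length := by
      rw [List.length_drop]; omega
    rw [he, List.getD_eq_getElem l 0 hj]
    have : l[j] = (l.drop (i+1))[j - (i+1)]'hlen := by
      rw [List.getElem_drop]
      congr 1
      omega
    rw [this]
    exact List.getElem_mem hlen
  have hsplit := l.take_append_drop (i+1)
  calc 2 ≤ (l.take (i+1)).count l[i] + (l.drop (i+1)).count l[i] := by
        have c1 := List.count_pos_iff.mpr h1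
        have c2 := List.count_pos_iff.mpr h2
        omega
    _ = l.count l[i] := by rw [← List.count_append, hsplit]

lemma count_one_split {x : ℕ} : ∀ {l : List ℕ}, l.count x = 1 →
    ∃ A B, l = A ++ x :: B ∧ x ∉ A ∧ x ∉ B := by
  intro l
  induction l with
  | nil => simp
  | cons a t ih =>
    intro h
    by_cases hax : a = x
    · subst hax
      have hc : (a :: t).count a = t.count a + 1 := List.count_cons_self
      have ht : t.count a = 0 := by rw [hc] at h; omega
      exact ⟨[], t, by simp, by simp, by rw [← List.count_eq_zero]; exact ht⟩
    · have hcc : (a :: t).count x = t.count x := by simp [List.count_cons, hax]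
      rw [hcc] at h
      obtain ⟨A, B, rfl, hA, hB⟩ := ih h
      refine ⟨a :: A, B, by simp, ?_, hB⟩
      intro hm
      rcases List.mem_cons.mp hm with h1 | h2
      · exact hax h1.symm
      · exact hA h2

lemma count_two_split {x : ℕ} : ∀ {l : List ℕ}, l.count x = 2 →
    ∃ A B C, l = A ++ x :: B ++ x :: C ∧ x ∉ A ∧ x ∉ B ∧ x ∉ C := by
  intro l
  induction l with
  | nil => simp
  | cons a t ih =>
    intro h
    by_cases hax : a = x
    · subst hax
      have hc : (a :: t).count a = t.count a + 1 := List.count_cons_self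
      have ht : t.count a = 1 := by rw [hc] at h; omega
      obtain ⟨B, C, rfl, hB, hC⟩ := count_one_split ht
      exact ⟨[], B, C, by simp, by simp, hB, hC⟩
    · have hcc : (a :: t).count x = t.count x := by simp [List.count_cons, hax]
      rw [hcc] at h
      obtain ⟨A, B, C, rfl, hA, hB, hC⟩ := ih h
      refine ⟨a :: A, B, C, by simp, ?_, hB, hC⟩
      intro hm
      rcases List.mem_cons.mp hm with h1 | h2
      · exact hax h1.symm
      · exact hA h2

lemma split_unique {x : ℕ} : ∀ (A A' B B' : List ℕ), x ∉ A → x ∉ A' →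
    A ++ x :: B = A' ++ x :: B' → A = A' ∧ B = B' := by
  intro A
  induction A with
  | nil =>
    intro A' B B' _ hA' h
    cases A' with
    | nil => simpa using h
    | cons a' T' =>
      simp at h
      exfalso; apply hA'; rw [← h.1]; simp
  | cons a T ih =>
    intro A' B B' hA hA' h
    cases A' with
    | nil =>
      simp at h
      exfalso; apply hA; rw [h.1]; simp
    | cons a' T' =>
      simp at h
      obtain ⟨h1, h2⟩ := h
      have := ih T' B B' (by simp at hA; tauto) (by simp at hA'; tauto) h2
      exact ⟨by rw [h1, this.1], this.2⟩

/-- Eulerian numbers. -/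
def Eul : ℕ → ℕ → ℕ
  | 0, 0 => 1
  | 0, _ + 1 => 0
  | n + 1, 0 => Eul n 0
  | n + 1, j + 1 => (j + 2) * Eul n (j + 1) + (n - j) * Eul n j

lemma Eul_zero : ∀ n, Eul n 0 = 1 := by
  intro n; induction n with
  | zero => rfl
  | succ n ih => rw [Eul, ih]

lemma Eul_gt : ∀ n j, n < j → Eul n j = 0 := by
  intro n
  induction n with
  | zero =>
    intro j hj
    cases j with
    | zero => omega
    | succ j => rfl
  | succ n ih =>
    intro j hj
    cases j with
    | zero => omega
    | succ j =>
      rw [Eul, ih (j+1) (by omega), Nat.sub_eq_zero_of_le (by omega)]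
      ring

lemma Eul_self (n : ℕ) (hn : 1 ≤ n) : Eul n n = 0 := by
  cases n with
  | zero => omega
  | succ m =>
    rw [Eul, Eul_gt m (m+1) (by omega), Nat.sub_self]
    ring

/-- key binomial identity, orientation 1 -/
lemma K1 (m n j : ℕ) (hj : j ≤ n) :
    m * Nat.choose (m + n - 1 - j) n
      = (j + 1) * Nat.choose (m + n - j) (n + 1) + (n - j) * Nat.choose (m + n - 1 - j) (n + 1) := by
  cases m with
  | zero =>
    rw [Nat.zero_add, Nat.zero_mul,
      Nat.choose_eq_zero_of_lt (show n - j < n + 1 by omega),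
      Nat.choose_eq_zero_of_lt (show n - 1 - j < n + 1 by omega)]
    simp
  | succ m' =>
    set a := m' + (n - j) with ha
    have h1 : m' + 1 + n - 1 - j = a := by omega
    have h2 : m' + 1 + n - j = a + 1 := by omega
    rw [h1, h2]
    by_cases hc : n ≤ a
    · obtain ⟨d, hd, hm'⟩ : ∃ d, a = n + d ∧ m' = j + d := ⟨m' - j, by omega, by omega⟩
      obtain ⟨e, he⟩ : ∃ e, n = j + e := ⟨n - j, by omega⟩
      subst he
      have pas : Nat.choose (a+1) (j+e+1) = Nat.choose a (j+e) + Nat.choose a (j+e+1) :=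
        Nat.choose_succ_succ a (j+e)
      have csr : Nat.choose a (j+e+1) * (j+e+1) = Nat.choose a (j+e) * (a - (j+e)) :=
        Nat.choose_succ_right_eq a (j+e)
      rw [show a - (j+e) = d by omega] at csr
      rw [pas, hm', show j + e - j = e by omega]
      zify at csr ⊢
      linear_combination -csr
    · rw [Nat.choose_eq_zero_of_lt (show a < n by omega),
        Nat.choose_eq_zero_of_lt (show a < n + 1 by omega),
        Nat.choose_eq_zero_of_lt (show a + 1 < n + 1 by omega)]
      simp

/-- key binomial identity, orientation 2 -/
lemma K2 (m n j : ℕ) (hj : j ≤ n) :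
    m * Nat.choose (m + j) n
      = (j + 1) * Nat.choose (m + j) (n + 1) + (n - j) * Nat.choose (m + j + 1) (n + 1) := by
  cases m with
  | zero =>
    rw [Nat.zero_mul, Nat.zero_add,
      Nat.choose_eq_zero_of_lt (show j < n + 1 by omega)]
    rcases Nat.lt_or_ge (j+1) (n+1) with h | h
    · rw [Nat.choose_eq_zero_of_lt h]; simp
    · have hjn : j = n := by omega
      subst hjn
      rw [Nat.sub_self]; simp
  | succ m' =>
    set a := m' + 1 + j with ha
    by_cases hc : n ≤ a
    · obtain ⟨d, hd⟩ : ∃ d, a = n + d := ⟨a - n, by omega⟩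
      obtain ⟨e, he⟩ : ∃ e, n = j + e := ⟨n - j, by omega⟩
      subst he
      have pas : Nat.choose (a+1) (j+e+1) = Nat.choose a (j+e) + Nat.choose a (j+e+1) :=
        Nat.choose_succ_succ a (j+e)
      have csr : Nat.choose a (j+e+1) * (j+e+1) = Nat.choose a (j+e) * (a - (j+e)) :=
        Nat.choose_succ_right_eq a (j+e)
      rw [show a - (j+e) = d by omega] at csr
      rw [pas, show j + e - j = e by omega, show m' + 1 = e + d by omega]
      zify at csr ⊢
      linear_combination -csr
    · rw [Nat.choose_eq_zero_of_lt (show a < n by omega),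
        Nat.choose_eq_zero_of_lt (show a < n + 1 by omega),
        Nat.choose_eq_zero_of_lt (show a + 1 < n + 1 by omega)]
      simp
lemma Eul_def00 : Eul 0 0 = 1 := by rw [Eul]
lemma Eul_def0succ : ∀ j : ℕ, Eul 0 (j+1) = 0 := fun j => by rw [Eul]
lemma Eul_def0 : ∀ n : ℕ, Eul (n+1) 0 = Eul n 0 := fun n => by rw [Eul]
lemma Eul_defS : ∀ n j : ℕ, Eul (n+1) (j+1) = (j + 2) * Eul n (j + 1) + (n - j) * Eul n j :=
  fun n j => by rw [Eul]

lemma Worp1 : ∀ (n m : ℕ), m ^ n = ∑ j ∈ Finset.range (n+1), Eul n j * Nat.choose (m + n - 1 - j) n := by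
  intro n
  induction n with
  | zero => intro m; simp [Eul_def00]
  | succ n ih =>
    intro m
    have main : ∑ j ∈ Finset.range (n+2), Eul (n+1) j * Nat.choose (m + (n+1) - 1 - j) (n+1)
        = Eul n 0 * Nat.choose (m + n) (n+1)
          + ∑ j ∈ Finset.range (n+1),
              ((j+2) * Eul n (j+1) + (n-j) * Eul n j) * Nat.choose (m + n - 1 - j) (n+1) := by
      have e1 : ∀ j ∈ Finset.range (n+2), Eul (n+1) j * Nat.choose (m + (n+1) - 1 - j) (n+1)
          = Eul (n+1) j * Nat.choose (m + n - j) (n+1) := by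
        intro j _
        have h : m + (n+1) - 1 - j = m + n - j := by omega
        rw [h]
      rw [Finset.sum_congr rfl e1, Finset.sum_range_succ']
      have e2 : ∀ j ∈ Finset.range (n+1), Eul (n+1) (j+1) * Nat.choose (m + n - (j+1)) (n+1)
          = ((j+2) * Eul n (j+1) + (n-j) * Eul n j) * Nat.choose (m + n - 1 - j) (n+1) := by
        intro j _
        rw [Eul_defS, show m + n - (j+1) = m + n - 1 - j by omega]
      rw [Finset.sum_congr rfl e2, Eul_def0, Nat.sub_zero]
      exact add_comm _ _
    rw [main]
    have lhs1 : m ^ (n+1) = ∑ j ∈ Finset.range (n+1), Eul n j * (m * Nat.choose (m + n - 1 - j) n) := by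
      rw [pow_succ, ih m, Finset.sum_mul]
      exact Finset.sum_congr rfl (fun j _ => by ring)
    rw [lhs1]
    have lhs2 : ∀ j ∈ Finset.range (n+1), Eul n j * (m * Nat.choose (m + n - 1 - j) n)
        = (j+1) * (Eul n j * Nat.choose (m + n - j) (n+1))
          + (n-j) * (Eul n j * Nat.choose (m + n - 1 - j) (n+1)) := by
      intro j hj
      rw [K1 m n j (Nat.lt_succ_iff.mp (Finset.mem_range.mp hj))]
      ring
    rw [Finset.sum_congr rfl lhs2, Finset.sum_add_distrib]
    have peel : ∑ j ∈ Finset.range (n+1), (j+1) * (Eul n j * Nat.choose (m + n - j) (n+1))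
        = Eul n 0 * Nat.choose (m + n) (n+1)
          + ∑ j ∈ Finset.range (n+1), ((j+2) * Eul n (j+1)) * Nat.choose (m + n - 1 - j) (n+1) := by
      rw [Finset.sum_range_succ' (fun j => (j+1) * (Eul n j * Nat.choose (m + n - j) (n+1))) n]
      have e3 : ∀ j ∈ Finset.range n, (j+1+1) * (Eul n (j+1) * Nat.choose (m + n - (j+1)) (n+1))
          = ((j+2) * Eul n (j+1)) * Nat.choose (m + n - 1 - j) (n+1) := by
        intro j _
        rw [show m + n - (j+1) = m + n - 1 - j by omega]
        ring
      rw [Finset.sum_congr rfl e3,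
        Finset.sum_range_succ (fun j => ((j+2) * Eul n (j+1)) * Nat.choose (m + n - 1 - j) (n+1)) n,
        Eul_gt n (n+1) (by omega)]
      simp [Nat.sub_zero]
      ring
    rw [peel, add_assoc, ← Finset.sum_add_distrib]
    congr 1
    exact Finset.sum_congr rfl (fun j _ => by ring)

lemma Worp2 : ∀ (n m : ℕ), m ^ n = ∑ j ∈ Finset.range (n+1), Eul n j * Nat.choose (m + j) n := by
  intro n
  induction n with
  | zero => intro m; simp [Eul_def00]
  | succ n ih =>
    intro m
    have main : ∑ j ∈ Finset.range (n+2), Eul (n+1) j * Nat.choose (m + j) (n+1)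
        = Eul n 0 * Nat.choose m (n+1)
          + ∑ j ∈ Finset.range (n+1),
              ((j+2) * Eul n (j+1) + (n-j) * Eul n j) * Nat.choose (m + j + 1) (n+1) := by
      rw [Finset.sum_range_succ']
      have e2 : ∀ j ∈ Finset.range (n+1), Eul (n+1) (j+1) * Nat.choose (m + (j+1)) (n+1)
          = ((j+2) * Eul n (j+1) + (n-j) * Eul n j) * Nat.choose (m + j + 1) (n+1) := by
        intro j _
        rw [Eul_defS, show m + (j+1) = m + j + 1 by omega]
      rw [Finset.sum_congr rfl e2, Eul_def0, Nat.add_zero m]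
      exact add_comm _ _
    rw [main]
    have lhs1 : m ^ (n+1) = ∑ j ∈ Finset.range (n+1), Eul n j * (m * Nat.choose (m + j) n) := by
      rw [pow_succ, ih m, Finset.sum_mul]
      exact Finset.sum_congr rfl (fun j _ => by ring)
    rw [lhs1]
    have lhs2 : ∀ j ∈ Finset.range (n+1), Eul n j * (m * Nat.choose (m + j) n)
        = (j+1) * (Eul n j * Nat.choose (m + j) (n+1))
          + (n-j) * (Eul n j * Nat.choose (m + j + 1) (n+1)) := by
      intro j hj
      rw [K2 m n j (Nat.lt_succ_iff.mp (Finset.mem_range.mp hj))]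
      ring
    rw [Finset.sum_congr rfl lhs2, Finset.sum_add_distrib]
    have peel : ∑ j ∈ Finset.range (n+1), (j+1) * (Eul n j * Nat.choose (m + j) (n+1))
        = Eul n 0 * Nat.choose m (n+1)
          + ∑ j ∈ Finset.range (n+1), ((j+2) * Eul n (j+1)) * Nat.choose (m + j + 1) (n+1) := by
      rw [Finset.sum_range_succ' (fun j => (j+1) * (Eul n j * Nat.choose (m + j) (n+1))) n]
      have e3 : ∀ j ∈ Finset.range n, (j+1+1) * (Eul n (j+1) * Nat.choose (m + (j+1)) (n+1))
          = ((j+2) * Eul n (j+1)) * Nat.choose (m + j + 1) (n+1) := by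
        intro j _
        rw [show m + (j+1) = m + j + 1 by omega]
        ring
      rw [Finset.sum_congr rfl e3,
        Finset.sum_range_succ (fun j => ((j+2) * Eul n (j+1)) * Nat.choose (m + j + 1) (n+1)) n,
        Eul_gt n (n+1) (by omega)]
      simp [Nat.add_zero]
      ring
    rw [peel, add_assoc, ← Finset.sum_add_distrib]
    congr 1
    exact Finset.sum_congr rfl (fun j _ => by ring)

lemma WP1 (n : ℕ) : ∀ (m : ℕ),
    ∑ j ∈ Finset.range (n+1), Eul n j * Nat.choose (m + n - j) (n+1) = ∑ i ∈ Finset.Icc 1 m, i ^ n := by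
  intro m
  induction m with
  | zero =>
    rw [show Finset.Icc 1 0 = ∅ by rfl]
    rw [Finset.sum_empty]
    apply Finset.sum_eq_zero
    intro j hj
    have := Finset.mem_range.mp hj
    rw [Nat.choose_eq_zero_of_lt (by omega)]
    simp
  | succ m ih =>
    have e1 : ∀ j ∈ Finset.range (n+1), Eul n j * Nat.choose (m + 1 + n - j) (n+1)
        = Eul n j * Nat.choose (m + n - j) (n+1) + Eul n j * Nat.choose (m + n - j) n := by
      intro j hj
      have hjn := Finset.mem_range.mp hj
      rw [show m + 1 + n - j = (m + n - j) + 1 by omega, Nat.choose_succ_succ]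
      ring
    rw [Finset.sum_congr rfl e1, Finset.sum_add_distrib, ih]
    have e2 : ∑ j ∈ Finset.range (n+1), Eul n j * Nat.choose (m + n - j) n = (m+1) ^ n := by
      rw [Worp1 n (m+1)]
      apply Finset.sum_congr rfl
      intro j hj
      have := Finset.mem_range.mp hj
      congr 2
      omega
    rw [e2, Finset.sum_Icc_succ_top (by omega : 1 ≤ m + 1)]

lemma WP2 (n : ℕ) (hn : 1 ≤ n) : ∀ (m : ℕ),
    ∑ j ∈ Finset.range (n+1), Eul n j * Nat.choose (m + j) (n+1) = ∑ i ∈ Finset.Icc 1 (m-1), i ^ n := by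
  intro m
  induction m with
  | zero =>
    rw [show (0:ℕ) - 1 = 0 by rfl, show Finset.Icc 1 0 = ∅ by rfl, Finset.sum_empty]
    apply Finset.sum_eq_zero
    intro j hj
    have := Finset.mem_range.mp hj
    rw [Nat.choose_eq_zero_of_lt (by omega)]
    simp
  | succ m ih =>
    have e1 : ∀ j ∈ Finset.range (n+1), Eul n j * Nat.choose (m + 1 + j) (n+1)
        = Eul n j * Nat.choose (m + j) (n+1) + Eul n j * Nat.choose (m + j) n := by
      intro j hj
      rw [show m + 1 + j = (m + j) + 1 by omega, Nat.choose_succ_succ]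
      ring
    rw [Finset.sum_congr rfl e1, Finset.sum_add_distrib, ih, ← Worp2 n m]
    rw [show m + 1 - 1 = m by omega]
    cases m with
    | zero =>
      simp [Nat.zero_pow (by omega : 0 < n)]
    | succ m' =>
      rw [show m' + 1 - 1 = m' by omega, Finset.sum_Icc_succ_top (by omega : 1 ≤ m' + 1)]

lemma dsc_ins : ∀ (u : List ℕ) (p x : ℕ), (∀ a ∈ u, a < x) → p ≤ u.length →
    dsc (u.take p ++ x :: u.drop p)
      = dsc u + (if p = u.length then 0 else
          if 0 < p ∧ u.getD p 0 < u.getD (p - 1) 0 then 0 else 1) := by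
  intro u
  induction u with
  | nil =>
    intro p x h hp
    simp only [List.length_nil, Nat.le_zero] at hp
    subst hp
    simp [dsc]
  | cons a t ih =>
    intro p x h hp
    have hax : a < x := h a (by simp)
    cases p with
    | zero =>
      simp only [List.take_zero, List.drop_zero, List.nil_append]
      rw [dsc_cons x (a :: t)]
      simp only [List.length_cons, List.getD_cons_zero]
      split_ifs <;> first | contradiction | omega
    | succ q =>
      have hq : q ≤ t.length := by simp only [List.length_cons] at hp; omega
      simp only [List.take_succ_cons, List.drop_succ_cons, List.cons_append]
      rw [dsc_cons a (t.take q ++ x :: t.drop q), dsc_cons a t,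
        ih q x (fun b hb => h b (by simp [hb])) hq]
      cases q with
      | zero =>
        simp only [List.take_zero, List.drop_zero, List.nil_append, List.getD_cons_zero,
          List.getD_cons_succ, List.length_cons, List.length_nil, Nat.zero_add, Nat.sub_self]
        split_ifs <;> first | contradiction | omega
      | succ q' =>
        cases t with
        | nil => simp at hq
        | cons b t' =>
          simp only [List.take_succ_cons, List.cons_append, List.getD_cons_zero,
            List.getD_cons_succ, List.length_cons, Nat.add_sub_cancel]
          split_ifs <;> first | contradiction | omega




lemma count_pos_ins (u : List ℕ) (x j : ℕ) (h : ∀ a ∈ u, a < x) :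
    ((Finset.range (u.length + 1)).filter fun p => dsc (u.take p ++ x :: u.drop p) = j).card
      = if j = dsc u then dsc u + 1
        else if j = dsc u + 1 then u.length - dsc u else 0 := by
  have key : ∀ p, p ≤ u.length → dsc (u.take p ++ x :: u.drop p)
      = dsc u + (if p = u.length then 0
          else if 0 < p ∧ u.getD p 0 < u.getD (p - 1) 0 then 0 else 1) :=
    fun p hp => dsc_ins u p x h hp
  have hA : ((Finset.range (u.length + 1)).filter
        fun p => dsc (u.take p ++ x :: u.drop p) = dsc u)
      = insert u.length
          (((Finset.range (u.length - 1)).filter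
            fun i => u.getD (i + 1) 0 < u.getD i 0).image (· + 1)) := by
    ext p
    simp only [Finset.mem_filter, Finset.mem_range, Finset.mem_insert, Finset.mem_image]
    constructor
    · rintro ⟨hp, hd⟩
      rw [key p (by omega)] at hd
      by_cases hpl : p = u.length
      · exact Or.inl hpl
      · right
        rw [if_neg hpl] at hd
        by_cases hc : 0 < p ∧ u.getD p 0 < u.getD (p - 1) 0
        · exact ⟨p - 1, ⟨by omega, by rw [show p - 1 + 1 = p by omega]; exact hc.2⟩, by omega⟩
        · rw [if_neg hc] at hd; omega
    · rintro (rfl | ⟨i, ⟨hi, hgd⟩, rfl⟩)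
      · refine ⟨by omega, ?_⟩
        rw [key u.length (le_refl _), if_pos rfl]
        omega
      · refine ⟨by omega, ?_⟩
        rw [key (i+1) (by omega), if_neg (by omega),
          if_pos ⟨Nat.succ_pos i, by rw [Nat.add_sub_cancel]; exact hgd⟩]
        omega
  have cardA : ((Finset.range (u.length + 1)).filter
        fun p => dsc (u.take p ++ x :: u.drop p) = dsc u).card = dsc u + 1 := by
    rw [hA, Finset.card_insert_of_notMem, Finset.card_image_of_injective _ (add_left_injective 1),
      dsc_eq_card u]
    simp only [Finset.mem_image, Finset.mem_filter, Finset.mem_range]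
    rintro ⟨i, ⟨hi, _⟩, hip⟩
    omega
  by_cases h1 : j = dsc u
  · subst h1; rw [if_pos rfl]; exact cardA
  · by_cases h2 : j = dsc u + 1
    · rw [if_neg h1, if_pos h2]
      have compl : ((Finset.range (u.length + 1)).filter
            fun p => dsc (u.take p ++ x :: u.drop p) = j)
          = ((Finset.range (u.length + 1)).filter
            fun p => ¬ (dsc (u.take p ++ x :: u.drop p) = dsc u)) := by
        apply Finset.filter_congr
        intro p hp
        simp only [Finset.mem_range] at hp
        rw [key p (by omega)]
        constructor
        · intro hh; omega
        · intro hh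
          split_ifs at hh ⊢ <;> omega
      rw [compl]
      have htot := Finset.card_filter_add_card_filter_not
        (s := Finset.range (u.length + 1))
        (p := fun p => dsc (u.take p ++ x :: u.drop p) = dsc u)
      rw [Finset.card_range] at htot
      rw [cardA] at htot
      omega
    · rw [if_neg h1, if_neg h2, Finset.card_eq_zero, Finset.filter_eq_empty_iff]
      intro p hp
      simp only [Finset.mem_range] at hp
      rw [key p (by omega)]
      split_ifs <;> first | contradiction | omega

def Ln (n : ℕ) : List ℕ := (List.range n).map (· + 1)

lemma length_Ln (n : ℕ) : (Ln n).length = n := by simp [Ln]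

lemma mem_Ln {a n : ℕ} : a ∈ Ln n ↔ 1 ≤ a ∧ a ≤ n := by
  simp only [Ln, List.mem_map, List.mem_range]
  constructor
  · rintro ⟨i, hi, rfl⟩; omega
  · rintro ⟨h1, h2⟩; exact ⟨a - 1, by omega, by omega⟩

lemma Ln_succ (n : ℕ) : Ln (n+1) = Ln n ++ [n+1] := by
  simp [Ln, List.range_succ]

lemma count_Ln_succ (n : ℕ) : (Ln (n+1)).count (n+1) = 1 := by
  rw [Ln_succ, List.count_append]
  have h0 : (Ln n).count (n+1) = 0 := by
    rw [List.count_eq_zero]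
    intro hc
    have := mem_Ln.mp hc
    omega
  simp [h0]

def TFin (n : ℕ) : Finset (List ℕ) := (Ln n).permutations.toFinset

lemma mem_TFin {w : List ℕ} {n : ℕ} : w ∈ TFin n ↔ w.Perm (Ln n) := by
  simp [TFin, List.mem_toFinset, List.mem_permutations]

def PFin (n j : ℕ) : Finset (List ℕ) := (TFin n).filter (fun w => dsc w = j)

lemma fiber_card (n j : ℕ) (u : List ℕ) (hu : u.Perm (Ln n)) :
    ((PFin (n+1) j).filter (fun w => w.erase (n+1) = u)).card
      = if j = dsc u then dsc u + 1 else if j = dsc u + 1 then n - dsc u else 0 := by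
  have hlen : u.length = n := by rw [hu.length_eq, length_Ln]
  have hub : ∀ a ∈ u, a < n + 1 := by
    intro a ha
    have := mem_Ln.mp (hu.subset ha)
    omega
  have hx : (n+1) ∉ u := fun hc => by have := mem_Ln.mp (hu.subset hc); omega
  have hcp := count_pos_ins u (n+1) j hub
  rw [hlen] at hcp
  rw [← hcp]
  refine (Finset.card_bij (fun p _ => u.take p ++ (n+1) :: u.drop p) ?_ ?_ ?_).symm
  · intro p hp
    simp only [Finset.mem_filter, Finset.mem_range] at hp
    have p1 : (u.take p ++ (n+1) :: u.drop p).Perm ((n+1) :: u) := by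
      have h := List.perm_middle (a := n+1) (l₁ := u.take p) (l₂ := u.drop p)
      rw [List.take_append_drop] at h
      exact h
    have p2 : ((n+1) :: u).Perm (Ln (n+1)) := by
      refine (hu.cons (n+1)).trans ?_
      rw [Ln_succ]
      simpa using (List.perm_middle (a := n+1) (l₁ := Ln n) (l₂ := [])).symm
    have her : (u.take p ++ (n+1) :: u.drop p).erase (n+1) = u := by
      rw [List.erase_append_right _ (fun hc => hx (List.mem_of_mem_take hc)),
        List.erase_cons_head, List.take_append_drop]
    simp only [Finset.mem_filter, PFin, mem_TFin]
    exact ⟨⟨p1.trans p2, hp.2⟩, her⟩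
  · intro p hp q hq heq
    simp only [Finset.mem_filter, Finset.mem_range] at hp hq
    have h1 := split_unique (u.take p) (u.take q) (u.drop p) (u.drop q)
      (fun hc => hx (List.mem_of_mem_take hc)) (fun hc => hx (List.mem_of_mem_take hc)) heq
    have := congrArg List.length h1.1
    simp only [List.length_take, hlen] at this
    omega
  · intro w hw
    simp only [Finset.mem_filter, PFin, mem_TFin] at hw
    obtain ⟨⟨hperm, hdsc⟩, her⟩ := hw
    have hcount : w.count (n+1) = 1 := by
      rw [hperm.count_eq, count_Ln_succ]
    obtain ⟨A, B, rfl, hA, hB⟩ := count_one_split hcount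
    have huAB : A ++ B = u := by
      rw [← her, List.erase_append_right _ hA, List.erase_cons_head]
    have hlA : A.length ≤ n := by
      have := congrArg List.length huAB
      simp only [List.length_append, hlen] at this
      omega
    subst huAB
    refine ⟨A.length, ?_, ?_⟩
    · simp only [Finset.mem_filter, Finset.mem_range]
      rw [List.take_left, List.drop_left]
      exact ⟨by omega, hdsc⟩
    · simp only [List.take_left, List.drop_left]



lemma PFin_fiberwise (n j : ℕ) :
    (PFin (n+1) j).card
      = ∑ u ∈ TFin n, (if j = dsc u then dsc u + 1
          else if j = dsc u + 1 then n - dsc u else 0) := by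
  rw [Finset.card_eq_sum_card_fiberwise (f := fun w => w.erase (n+1)) (t := TFin n)]
  · apply Finset.sum_congr rfl
    intro u hu
    exact fiber_card n j u (mem_TFin.mp hu)
  · intro w hw
    simp only [PFin, Finset.mem_coe, Finset.mem_filter, mem_TFin] at hw
    rw [Finset.mem_coe, mem_TFin]
    have h1 : (Ln (n+1)).erase (n+1) = Ln n := by
      rw [Ln_succ, List.erase_append_right _ (fun hc => by have := mem_Ln.mp hc; omega)]
      simp
    calc (w.erase (n+1)).Perm ((Ln (n+1)).erase (n+1)) := hw.1.erase (n+1)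
      _ = Ln n := h1
    
lemma PFin_zero_succ (n : ℕ) : (PFin (n+1) 0).card = (PFin n 0).card := by
  rw [PFin_fiberwise]
  rw [show (PFin n 0).card = ∑ u ∈ TFin n, (if dsc u = 0 then 1 else 0) by
    rw [PFin, Finset.card_filter]]
  apply Finset.sum_congr rfl
  intro u _
  split_ifs <;> first | contradiction | omega

lemma PFin_succ_succ (n j : ℕ) :
    (PFin (n+1) (j+1)).card
      = (j+2) * (PFin n (j+1)).card + (n - j) * (PFin n j).card := by
  rw [PFin_fiberwise]
  have e1 : ∀ u ∈ TFin n, (if j+1 = dsc u then dsc u + 1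
        else if j+1 = dsc u + 1 then n - dsc u else 0)
      = (if dsc u = j+1 then (j+2) else 0) + (if dsc u = j then n - j else 0) := by
    intro u _
    split_ifs <;> first | contradiction | omega
  rw [Finset.sum_congr rfl e1, Finset.sum_add_distrib]
  have e2 : ∀ (c v : ℕ), ∑ u ∈ TFin n, (if dsc u = c then v else 0) = v * (PFin n c).card := by
    intro c v
    rw [PFin, ← Finset.sum_filter, Finset.sum_const, smul_eq_mul, mul_comm]
  rw [e2 (j+1) (j+2), e2 j (n-j)]

lemma PermCount : ∀ n j, (PFin n j).card = Eul n j := by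
  intro n
  induction n with
  | zero =>
    intro j
    have hT : TFin 0 = {[]} := by
      simp [TFin, Ln]
    cases j with
    | zero =>
      rw [PFin, hT, Eul_def00]
      rfl
    | succ j =>
      rw [PFin, hT, Eul_def0succ]
      rfl
  | succ n ih =>
    intro j
    cases j with
    | zero => rw [PFin_zero_succ, Eul_def0, ih]
    | succ j => rw [PFin_succ_succ, Eul_defS, ih, ih]

lemma nodup_Ln (n : ℕ) : (Ln n).Nodup :=
  List.nodup_range.map (add_left_injective 1)

lemma getD_mid (A C : List ℕ) (x : ℕ) : (A ++ x :: C).getD A.length 0 = x := by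
  rw [List.getD_append_right _ _ _ _ (le_refl _), Nat.sub_self]
  rfl

lemma getD_mid_right (A C : List ℕ) (x : ℕ) (i : ℕ) :
    (A ++ x :: C).getD (A.length + 1 + i) 0 = C.getD i 0 := by
  rw [List.getD_append_right _ _ _ _ (by omega), show A.length + 1 + i - A.length = i + 1 by omega]
  rfl

/-- The two copies of x must be adjacent in a Stirling permutation. -/
lemma stirling_struct (m : ℕ) (w : List ℕ)
    (hmul : (↑w : Multiset ℕ) = (↑(Ln m ++ [m+1, m+1]) : Multiset ℕ))
    (hst : IsStirlingPerm w) :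
    ∃ A B, w = A ++ (m+1) :: (m+1) :: B ∧ (m+1) ∉ A ∧ (m+1) ∉ B := by
  have hperm : w.Perm (Ln m ++ [m+1, m+1]) := Multiset.coe_eq_coe.mp hmul
  have hcount : w.count (m+1) = 2 := by
    rw [hperm.count_eq, List.count_append]
    have h0 : (Ln m).count (m+1) = 0 := by
      rw [List.count_eq_zero]
      intro hc
      have := mem_Ln.mp hc
      omega
    rw [h0]
    simp
  obtain ⟨A, B, C, heq, hA, hB, hC⟩ := count_two_split hcount
  cases B with
  | nil =>
    exact ⟨A, C, by simpa using heq, hA, hC⟩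
  | cons c B' =>
    exfalso
    subst heq
    set x := m + 1 with hx
    -- positions
    have len : (A ++ x :: (c :: B') ++ x :: C).length
        = A.length + 1 + (B'.length + 1) + 1 + C.length := by
      simp [List.length_append]
      omega
    have g_i : (A ++ x :: (c :: B') ++ x :: C).getD A.length 0 = x := by
      rw [show A ++ x :: (c :: B') ++ x :: C = A ++ x :: ((c :: B') ++ x :: C) by simp]
      exact getD_mid _ _ _
    have g_s : (A ++ x :: (c :: B') ++ x :: C).getD (A.length + 1) 0 = c := by
      rw [show A ++ x :: (c :: B') ++ x :: C = A ++ x :: ((c :: B') ++ x :: C) by simp,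
        show A.length + 1 = A.length + 1 + 0 by omega]
      rw [getD_mid_right]
      rfl
    have g_j : (A ++ x :: (c :: B') ++ x :: C).getD (A.length + 1 + (B'.length + 1)) 0 = x := by
      rw [show A ++ x :: (c :: B') ++ x :: C = A ++ x :: ((c :: B') ++ x :: C) by simp]
      rw [getD_mid_right]
      have : (B'.length + 1) = (c :: B').length := by simp
      rw [this, getD_mid (c :: B') C x]
    have hcmem : c ∈ A ++ x :: (c :: B') ++ x :: C := by simp
    have hcube := hperm.subset hcmem
    have hcx : c ≠ x := fun hcc => hB (by simp [hcc])
    have hcle : c ≤ m := by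
      rcases List.mem_append.mp hcube with h | h
      · exact (mem_Ln.mp h).2
      · simp at h
        omega
    have := hst A.length (A.length + 1) (A.length + 1 + (B'.length + 1))
      (by omega) (by omega) (by omega) (by rw [g_i, g_j])
    rw [g_i, g_s] at this
    omega


lemma count_le_one_of_ne (m x c : ℕ) (hcx : c ≠ x) (w : List ℕ)
    (hperm : w.Perm (Ln m ++ [x, x])) : w.count c ≤ 1 := by
  rw [hperm.count_eq, List.count_append]
  have h2 : List.count c [x, x] = 0 := by
    rw [List.count_eq_zero]
    simp [hcx]
  have h1 : List.count c (Ln m) ≤ 1 := List.nodup_iff_count_le_one.mp (nodup_Ln m) c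
  omega

lemma pos_x (A B : List ℕ) (x : ℕ) (hA : x ∉ A) (hB : x ∉ B) :
    ∀ t, t < (A ++ x :: x :: B).length → (A ++ x :: x :: B).getD t 0 = x →
      t = A.length ∨ t = A.length + 1 := by
  intro t ht hg
  have hlen : (A ++ x :: x :: B).length = A.length + 2 + B.length := by
    simp [List.length_append]
    omega
  by_contra hcon
  push_neg at hcon
  rcases Nat.lt_or_ge t A.length with h | h
  · rw [List.getD_append _ _ _ _ h] at hg
    apply hA
    rw [← hg]
    rw [List.getD_eq_getElem _ _ h]
    exact List.getElem_mem h
  · have h2 : A.length + 2 ≤ t := by omega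
    rw [List.getD_append_right _ _ _ _ (by omega)] at hg
    obtain ⟨k, hk⟩ : ∃ k, t - A.length = k + 2 := ⟨t - A.length - 2, by omega⟩
    rw [hk] at hg
    have hgB : (x :: x :: B).getD (k+2) 0 = B.getD k 0 := rfl
    rw [hgB] at hg
    apply hB
    rw [← hg]
    have hkB : k < B.length := by omega
    rw [List.getD_eq_getElem _ _ hkB]
    exact List.getElem_mem hkB

lemma stirling_of_struct (m : ℕ) (A B : List ℕ)
    (hperm : (A ++ (m+1) :: (m+1) :: B).Perm (Ln m ++ [m+1, m+1]))
    (hA : (m+1) ∉ A) (hB : (m+1) ∉ B) :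
    IsStirlingPerm (A ++ (m+1) :: (m+1) :: B) := by
  intro i s j h1 h2 h3 heq
  set w := A ++ (m+1) :: (m+1) :: B with hw
  by_cases hc : w.getD i 0 = m + 1
  · exfalso
    have hi := pos_x A B (m+1) hA hB i (by rw [← hw]; omega) (by rw [← hw]; exact hc)
    have hj := pos_x A B (m+1) hA hB j (by rw [← hw]; omega)
      (by rw [← hw, ← heq]; exact hc)
    omega
  · exfalso
    have hcnt := two_pos_count w i j (by omega) h3 heq
    have := count_le_one_of_ne m (m+1) (w.getD i 0) hc w hperm
    omega

/-- reduction bijection -/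
lemma stir_red (m j : ℕ) :
    Nat.card {w : List ℕ // (↑w : Multiset ℕ) = (↑(Ln m ++ [m+1, m+1]) : Multiset ℕ)
        ∧ IsStirlingPerm w ∧ dsc w = j}
      = Nat.card {v : List ℕ // (↑v : Multiset ℕ) = (↑(Ln (m+1)) : Multiset ℕ) ∧ dsc v = j} := by
  have erLn : (Ln m ++ [m+1, m+1]).erase (m+1) = Ln (m+1) := by
    rw [List.erase_append_right _ (fun hc => by have := mem_Ln.mp hc; omega), Ln_succ]
    simp
  have herase : ∀ w : List ℕ, (↑w : Multiset ℕ) = (↑(Ln m ++ [m+1, m+1]) : Multiset ℕ) →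
      IsStirlingPerm w → dsc w = j →
      ((↑(w.erase (m+1)) : Multiset ℕ) = (↑(Ln (m+1)) : Multiset ℕ) ∧ dsc (w.erase (m+1)) = j) := by
    intro w hmul hst hdsc
    obtain ⟨A, B, heq, hA, hB⟩ := stirling_struct m w hmul hst
    have he : w.erase (m+1) = A ++ (m+1) :: B := by
      rw [heq, List.erase_append_right _ hA, List.erase_cons_head]
    constructor
    · rw [Multiset.coe_eq_coe]
      have hp := (Multiset.coe_eq_coe.mp hmul).erase (m+1)
      rw [erLn] at hp
      exact hp
    · rw [he, ← dsc_dup (m+1) B A, ← heq, hdsc]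
  apply Nat.card_congr
  refine Equiv.ofBijective
    (fun p => ⟨p.1.erase (m+1), herase p.1 p.2.1 p.2.2.1 p.2.2.2⟩) ⟨?_, ?_⟩
  · rintro ⟨w, hw⟩ ⟨w', hw'⟩ hfeq
    simp only [Subtype.mk.injEq] at hfeq ⊢
    obtain ⟨A, B, heq, hA, hB⟩ := stirling_struct m w hw.1 hw.2.1
    obtain ⟨A', B', heq', hA', hB'⟩ := stirling_struct m w' hw'.1 hw'.2.1
    rw [heq, heq', List.erase_append_right _ hA, List.erase_append_right _ hA',
      List.erase_cons_head, List.erase_cons_head] at hfeq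
    obtain ⟨e1, e2⟩ := split_unique A A' B B' hA hA' hfeq
    rw [heq, heq', e1, e2]
  · rintro ⟨v, hv⟩
    have hcnt : v.count (m+1) = 1 := by
      rw [(Multiset.coe_eq_coe.mp hv.1).count_eq, count_Ln_succ]
    obtain ⟨A, B, heq, hA, hB⟩ := count_one_split hcnt
    have hwperm : (A ++ (m+1) :: (m+1) :: B).Perm (Ln m ++ [m+1, m+1]) := by
      have s1 : (A ++ (m+1) :: (m+1) :: B).Perm ((m+1) :: (A ++ (m+1) :: B)) :=
        List.perm_middle
      have s2 : ((m+1) :: (A ++ (m+1) :: B)).Perm ((m+1) :: Ln (m+1)) := by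
        refine List.Perm.cons _ ?_
        rw [← heq]
        exact Multiset.coe_eq_coe.mp hv.1
      have s3 : ((m+1) :: Ln (m+1)).Perm (Ln m ++ [m+1, m+1]) := by
        rw [Ln_succ]
        have : (Ln m ++ [m+1, m+1]) = Ln m ++ (m+1) :: [m+1] := rfl
        rw [this]
        exact (List.perm_middle.trans (by simp)).symm
      exact (s1.trans s2).trans s3
    refine ⟨⟨A ++ (m+1) :: (m+1) :: B, Multiset.coe_eq_coe.mpr hwperm,
      stirling_of_struct m A B hwperm hA hB, ?_⟩, ?_⟩
    · rw [dsc_dup (m+1) B A, ← heq]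
      exact hv.2
    · apply Subtype.ext
      simp only
      rw [List.erase_append_right _ hA, List.erase_cons_head, ← heq]

lemma descents_eq (w : List ℕ) : descents w = dsc w + 1 := by
  rw [descents, dsc_eq_card]

lemma msum (mm : ℕ) :
    (∑ i ∈ Finset.range mm, Multiset.replicate 1 (i+1)) = (↑(Ln mm) : Multiset ℕ) := by
  induction mm with
  | zero => simp [Ln]
  | succ mm ih =>
    rw [Finset.sum_range_succ, ih, Ln_succ, ← Multiset.coe_add]
    congr 1

lemma multisetOf_eq (mm : ℕ) :
    multisetOf (fun i => if i = mm then 2 else 1) (mm+1) = ↑(Ln mm ++ [mm+1, mm+1]) := by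
  rw [multisetOf, Finset.sum_range_succ, if_pos rfl]
  have e : ∀ i ∈ Finset.range mm,
      Multiset.replicate (if i = mm then 2 else 1) (i+1) = Multiset.replicate 1 (i+1) := by
    intro i hi
    rw [if_neg (by have := Finset.mem_range.mp hi; omega)]
  rw [Finset.sum_congr rfl e, msum, ← Multiset.coe_add]
  congr 1

lemma natcard_perm (n j : ℕ) :
    Nat.card {v : List ℕ // (↑v : Multiset ℕ) = (↑(Ln n) : Multiset ℕ) ∧ dsc v = j}
      = (PFin n j).card := by
  rw [Nat.card_congr (Equiv.subtypeEquivRight (q := fun v => v ∈ PFin n j) (fun v => by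
    simp only [PFin, Finset.mem_filter, mem_TFin, Multiset.coe_eq_coe]))]
  exact Nat.card_eq_finsetCard _

lemma eulerianA_eq (mm i : ℕ) (hi : 1 ≤ i) :
    eulerianA (fun i => if i = mm then 2 else 1) (mm+1) i = Eul (mm+1) (i-1) := by
  rw [eulerianA]
  rw [Nat.card_congr (Equiv.subtypeEquivRight
    (q := fun w : List ℕ => (↑w : Multiset ℕ) = (↑(Ln mm ++ [mm+1, mm+1]) : Multiset ℕ)
        ∧ IsStirlingPerm w ∧ dsc w = i - 1)
    (fun w => by
      rw [multisetOf_eq, descents_eq]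
      constructor
      · rintro ⟨h1, h2, h3⟩; exact ⟨h1, h2, by omega⟩
      · rintro ⟨h1, h2, h3⟩; exact ⟨h1, h2, by omega⟩))]
  rw [stir_red, natcard_perm, PermCount]

lemma bigK_eq (mm : ℕ) : bigK (fun i => if i = mm then 2 else 1) (mm+1) = mm + 2 := by
  rw [bigK, Finset.sum_range_succ, if_pos rfl]
  have e : ∀ i ∈ Finset.range mm, (if i = mm then 2 else 1) = 1 := by
    intro i hi
    rw [if_neg (by have := Finset.mem_range.mp hi; omega)]
  rw [Finset.sum_congr rfl e, Finset.sum_const, smul_eq_mul, mul_one, Finset.card_range]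

/-- For k = (1,...,1,2) (n-1 ones followed by a 2), B_k(m) = ∑_{i=1}^m i^n and
b_k(m) = ∑_{i=1}^{m-1} i^n. -/
theorem Bpoly_bpoly_power_sums (n m : ℕ) (hn : 1 ≤ n) (hm : 1 ≤ m) :
    Bpoly (fun i => if i = n - 1 then 2 else 1) n m = ∑ i ∈ Finset.Icc 1 m, i ^ n ∧
    bpoly (fun i => if i = n - 1 then 2 else 1) n m = ∑ i ∈ Finset.Icc 1 (m - 1), i ^ n := by
  obtain ⟨mm, rfl⟩ : ∃ mm, n = mm + 1 := ⟨n - 1, by omega⟩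
  simp only [Nat.add_sub_cancel]
  constructor
  · rw [Bpoly, bigK_eq]
    have e1 : ∀ i ∈ Finset.Icc 1 (mm+1),
        eulerianA (fun i => if i = mm then 2 else 1) (mm+1) i * Nat.choose (mm + 2 + m - i) (mm+2)
          = Eul (mm+1) (i-1) * Nat.choose (mm + 2 + m - i) (mm+2) := by
      intro i hi
      have := Finset.mem_Icc.mp hi
      rw [eulerianA_eq mm i (by omega)]
    rw [Finset.sum_congr rfl e1, ← Finset.Ico_add_one_right_eq_Icc, Finset.sum_Ico_eq_sum_range]
    have e2 : ∀ kk ∈ Finset.range (mm + 1 + 1 - 1),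
        Eul (mm+1) (1 + kk - 1) * Nat.choose (mm + 2 + m - (1 + kk)) (mm+2)
          = Eul (mm+1) kk * Nat.choose (m + (mm+1) - kk) ((mm+1)+1) := by
      intro kk hk
      have := Finset.mem_range.mp hk
      rw [show 1 + kk - 1 = kk by omega, show mm + 2 + m - (1 + kk) = m + (mm+1) - kk by omega]
    have ext1 : ∑ j ∈ Finset.range (mm+1+1), Eul (mm+1) j * Nat.choose (m + (mm+1) - j) ((mm+1)+1)
        = ∑ j ∈ Finset.range (mm+1), Eul (mm+1) j * Nat.choose (m + (mm+1) - j) ((mm+1)+1) := by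
      rw [Finset.sum_range_succ, Eul_self (mm+1) (by omega), zero_mul, add_zero]
    rw [Finset.sum_congr rfl e2, show mm + 1 + 1 - 1 = mm + 1 by omega, ← ext1, WP1 (mm+1) m]
  · rw [bpoly, bigK_eq, show mm + 2 - (mm + 1) + 1 = 2 by omega]
    have e1 : ∀ i ∈ Finset.Icc 2 (mm+2),
        eulerianA (fun i => if i = mm then 2 else 1) (mm+1) (mm + 2 + 1 - i)
            * Nat.choose (mm + 2 + m - i) (mm+2)
          = Eul (mm+1) (mm + 2 - i) * Nat.choose (mm + 2 + m - i) (mm+2) := by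
      intro i hi
      have := Finset.mem_Icc.mp hi
      rw [eulerianA_eq mm (mm + 2 + 1 - i) (by omega), show mm + 2 + 1 - i - 1 = mm + 2 - i by omega]
    rw [Finset.sum_congr rfl e1, ← Finset.Ico_add_one_right_eq_Icc, Finset.sum_Ico_eq_sum_range]
    have e2 : ∀ kk ∈ Finset.range (mm + 2 + 1 - 2),
        Eul (mm+1) (mm + 2 - (2 + kk)) * Nat.choose (mm + 2 + m - (2 + kk)) (mm+2)
          = Eul (mm+1) (mm + 1 - 1 - kk) * Nat.choose (m + (mm + 1 - 1 - kk)) ((mm+1)+1) := by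
      intro kk hk
      have := Finset.mem_range.mp hk
      rw [show mm + 2 - (2 + kk) = mm + 1 - 1 - kk by omega,
        show mm + 2 + m - (2 + kk) = m + (mm + 1 - 1 - kk) by omega]
    rw [Finset.sum_congr rfl e2, show mm + 2 + 1 - 2 = mm + 1 by omega]
    rw [Finset.sum_range_reflect (fun kk => Eul (mm+1) kk * Nat.choose (m + kk) ((mm+1)+1)) (mm+1)]
    have ext2 : ∑ j ∈ Finset.range (mm+1+1), Eul (mm+1) j * Nat.choose (m + j) ((mm+1)+1)
        = ∑ j ∈ Finset.range (mm+1), Eul (mm+1) j * Nat.choose (m + j) ((mm+1)+1) := by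
      rw [Finset.sum_range_succ, Eul_self (mm+1) (by omega), zero_mul, add_zero]
    rw [← ext2, WP2 (mm+1) (by omega) m]
end
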